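/- arXiv:0901.1584 — 4 statements merged into one kernel-verified Lean document; each statement's English description precedes it below -/
import Mathlib

section
/- Let S be a continuous propositional logic, let S̃ be its Stone space and let θ denote the map φ ↦ φ̂. Then: (1) S̃ is a compact Hausdorff space; (2) each φ̂ : S̃ → [0,1] is continuous, and θ respects the operations, i.e. (¬φ)̂ = 1 − φ̂, (½φ)̂ = φ̂/2 and (φ∸ψ)̂ = max(φ̂ − ψ̂, 0) pointwise; (3) φ̂ = ψ̂ if and only if v(φ) = v(ψ) for every truth assignment v; (4) the image of θ is dense in C(S̃, [0,1]) with respect to the uniform (sup) metric. -/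
namespace Stmt9

/-- A continuous propositional logic: a set equipped with a binary operation `∸` and unary
operations `¬` and `½` (no axioms imposed). -/
structure CPL (S : Type*) where
  sub : S → S → S
  neg : S → S
  half : S → S

variable {S : Type*}

/-- A truth assignment on a continuous propositional logic: a map into `[0,1]` respecting
the connectives. -/
def CPL.IsTruthAssignment (L : CPL S) (v : S → ℝ) : Prop :=
  (∀ φ : S, v φ ∈ Set.Icc (0 : ℝ) 1) ∧
  (∀ φ : S, v (L.neg φ) = 1 - v φ) ∧
  (∀ φ : S, v (L.half φ) = v φ / 2) ∧
  (∀ φ ψ : S, v (L.sub φ ψ) = max (v φ - v ψ) 0)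

/-- `φ ∧ ψ` abbreviates `φ ∸ (φ ∸ ψ)`. -/
def CPL.land (L : CPL S) (φ ψ : S) : S := L.sub φ (L.sub φ ψ)

/-- The axiom schemes A1–A6 of continuous propositional logic. -/
inductive CPL.Axiom (L : CPL S) : S → Prop where
  | a1 (φ ψ : S) : CPL.Axiom L (L.sub (L.sub φ ψ) φ)
  | a2 (φ ψ ρ : S) : CPL.Axiom L (L.sub (L.sub (L.sub ρ φ) (L.sub ρ ψ)) (L.sub ψ φ))
  | a3 (φ ψ : S) : CPL.Axiom L (L.sub (L.land φ ψ) (L.land ψ φ))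
  | a4 (φ ψ : S) : CPL.Axiom L (L.sub (L.sub φ ψ) (L.sub (L.neg ψ) (L.neg φ)))
  | a5 (φ : S) : CPL.Axiom L (L.sub (L.half φ) (L.sub φ (L.half φ)))
  | a6 (φ : S) : CPL.Axiom L (L.sub (L.sub φ (L.half φ)) (L.half φ))

/-- Formal deduction from a set of premises `Γ`, using the axiom schemes A1–A6 and
Modus Ponens (from `φ` and `ψ ∸ φ` infer `ψ`). -/
inductive CPL.Deduces (L : CPL S) (Γ : Set S) : S → Prop where
  | ax {φ : S} : CPL.Axiom L φ → CPL.Deduces L Γ φ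
  | prem {φ : S} : φ ∈ Γ → CPL.Deduces L Γ φ
  | mp {φ ψ : S} : CPL.Deduces L Γ φ → CPL.Deduces L Γ (L.sub ψ φ) → CPL.Deduces L Γ ψ

/-- The Stone space of a continuous propositional logic: the set of truth assignments,
topologized as a subspace of `[0,1]^S ⊆ ℝ^S` with the product (pointwise convergence)
topology. -/
def CPL.StoneSpace (L : CPL S) : Type _ := {v : S → ℝ // L.IsTruthAssignment v}

instance (L : CPL S) : TopologicalSpace (CPL.StoneSpace L) :=
  inferInstanceAs (TopologicalSpace {v : S → ℝ // L.IsTruthAssignment v})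

/-- `φ̂ : S̃ → [0,1]`, `φ̂(v) = v(φ)`. -/
def CPL.evalAt (L : CPL S) (φ : S) : L.StoneSpace → ℝ := fun v => v.1 φ

/-! ### Auxiliary development -/

lemma CPL.isClosed_truth (L : CPL S) : IsClosed {v : S → ℝ | L.IsTruthAssignment v} := by
  have hrw : {v : S → ℝ | L.IsTruthAssignment v} =
      (⋂ φ, {v : S → ℝ | v φ ∈ Set.Icc (0:ℝ) 1}) ∩
      ((⋂ φ, {v : S → ℝ | v (L.neg φ) = 1 - v φ}) ∩
      ((⋂ φ, {v : S → ℝ | v (L.half φ) = v φ / 2}) ∩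
      (⋂ φ, ⋂ ψ, {v : S → ℝ | v (L.sub φ ψ) = max (v φ - v ψ) 0}))) := by
    ext v
    simp only [CPL.IsTruthAssignment, Set.mem_setOf_eq, Set.mem_inter_iff, Set.mem_iInter]
  rw [hrw]
  have c1 : IsClosed (⋂ φ, {v : S → ℝ | v φ ∈ Set.Icc (0:ℝ) 1}) :=
    isClosed_iInter fun φ => IsClosed.preimage (continuous_apply φ) isClosed_Icc
  have c2 : IsClosed (⋂ φ, {v : S → ℝ | v (L.neg φ) = 1 - v φ}) :=
    isClosed_iInter fun φ =>
      isClosed_eq (continuous_apply _) (continuous_const.sub (continuous_apply φ))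
  have c3 : IsClosed (⋂ φ, {v : S → ℝ | v (L.half φ) = v φ / 2}) :=
    isClosed_iInter fun φ =>
      isClosed_eq (continuous_apply _) ((continuous_apply φ).div_const 2)
  have c4 : IsClosed (⋂ φ, ⋂ ψ, {v : S → ℝ | v (L.sub φ ψ) = max (v φ - v ψ) 0}) :=
    isClosed_iInter fun φ => isClosed_iInter fun ψ =>
      isClosed_eq (continuous_apply _)
        (((continuous_apply φ).sub (continuous_apply ψ)).max continuous_const)
  exact c1.inter (c2.inter (c3.inter c4))

instance (L : CPL S) : CompactSpace L.StoneSpace := by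
  have hc : IsCompact (Set.pi Set.univ fun _ : S => Set.Icc (0:ℝ) 1) :=
    isCompact_univ_pi fun _ => isCompact_Icc
  have hsub : {v : S → ℝ | L.IsTruthAssignment v} ⊆ Set.pi Set.univ fun _ : S => Set.Icc (0:ℝ) 1 :=
    fun v hv => Set.mem_univ_pi.mpr fun φ => hv.1 φ
  have := hc.of_isClosed_subset L.isClosed_truth hsub
  exact isCompact_iff_compactSpace.mp this

instance (L : CPL S) : T2Space L.StoneSpace :=
  inferInstanceAs (T2Space {v : S → ℝ // L.IsTruthAssignment v})

lemma CPL.continuous_evalAt (L : CPL S) (φ : S) : Continuous (L.evalAt φ) :=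
  (continuous_apply φ).comp continuous_subtype_val

def CPL.eC (L : CPL S) (φ : S) : C(L.StoneSpace, ℝ) := ⟨L.evalAt φ, L.continuous_evalAt φ⟩

@[simp] lemma CPL.eC_apply (L : CPL S) (φ : S) (v : L.StoneSpace) : L.eC φ v = v.1 φ := rfl

def CPL.EvSet (L : CPL S) : Set C(L.StoneSpace, ℝ) := Set.range L.eC

noncomputable def CPL.KSet (L : CPL S) : Set C(L.StoneSpace, ℝ) := closure L.EvSet

section RealLemmas

private lemma real1 (a b : ℝ) : 1 - max (1 - a - b) 0 = min (a + b) 1 := by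
  rcases le_total (a + b) 1 with h | h
  · rw [max_eq_left (by linarith), min_eq_left h]; ring
  · rw [max_eq_right (by linarith), min_eq_right h]; ring

private lemma real2 (a b : ℝ) (ha : a ≤ 1) (hb : b ≤ 1) :
    max a b = min (max (a - b) 0 + b) 1 := by
  rcases le_total a b with h | h
  · rw [max_eq_right h, max_eq_right (by linarith), zero_add, min_eq_left hb]
  · rw [max_eq_left h, max_eq_left (by linarith), sub_add_cancel, min_eq_left ha]

private lemma real3 (a b : ℝ) : 1 - max (1 - a) (1 - b) = min a b := by
  rcases le_total a b with h | h
  · rw [max_eq_left (by linarith), min_eq_left h]; ring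
  · rw [max_eq_right (by linarith), min_eq_right h]; ring

private lemma real4 (d : ℝ) (hd : 0 ≤ d) (n : ℕ) :
    min (min ((n : ℝ) * d) 1 + d) 1 = min (((n : ℝ) + 1) * d) 1 := by
  rcases le_total ((n : ℝ) * d) 1 with h | h
  · rw [min_eq_left h]
    congr 1
    ring
  · rw [min_eq_right h, min_eq_right (by linarith), min_eq_right (by nlinarith)]

end RealLemmas

section Ops

variable (L : CPL S)

lemma CPL.mem_Icc_of_EvSet {g : C(L.StoneSpace, ℝ)} (hg : g ∈ L.EvSet) (v : L.StoneSpace) :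
    g v ∈ Set.Icc (0:ℝ) 1 := by
  obtain ⟨φ, rfl⟩ := hg
  exact v.2.1 φ

lemma CPL.one_mem [Nonempty S] : (1 : C(L.StoneSpace, ℝ)) ∈ L.EvSet := by
  obtain ⟨φ⟩ := (inferInstance : Nonempty S)
  refine ⟨L.neg (L.sub φ φ), ?_⟩
  ext v
  simp [CPL.eC, CPL.evalAt, v.2.2.1, v.2.2.2.2]

lemma CPL.neg_mem {g : C(L.StoneSpace, ℝ)} (hg : g ∈ L.EvSet) : 1 - g ∈ L.EvSet := by
  obtain ⟨φ, rfl⟩ := hg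
  exact ⟨L.neg φ, by ext v; simp [CPL.eC, CPL.evalAt, v.2.2.1]⟩

lemma CPL.half_mem {g : C(L.StoneSpace, ℝ)} (hg : g ∈ L.EvSet) :
    (2⁻¹ : ℝ) • g ∈ L.EvSet := by
  obtain ⟨φ, rfl⟩ := hg
  refine ⟨L.half φ, ?_⟩
  ext v
  rw [ContinuousMap.smul_apply]
  show v.1 (L.half φ) = 2⁻¹ • v.1 φ
  rw [v.2.2.2.1, smul_eq_mul]
  ring

lemma CPL.tsub_mem {f g : C(L.StoneSpace, ℝ)} (hf : f ∈ L.EvSet) (hg : g ∈ L.EvSet) :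
    (f - g) ⊔ 0 ∈ L.EvSet := by
  obtain ⟨φ, rfl⟩ := hf
  obtain ⟨ψ, rfl⟩ := hg
  refine ⟨L.sub φ ψ, ?_⟩
  ext v
  simp [CPL.eC, CPL.evalAt, v.2.2.2.2, max_comm]

lemma CPL.tadd_mem {f g : C(L.StoneSpace, ℝ)} (hf : f ∈ L.EvSet) (hg : g ∈ L.EvSet) :
    (f + g) ⊓ 1 ∈ L.EvSet := by
  have h1 : ((1 - f) - g) ⊔ 0 ∈ L.EvSet := L.tsub_mem (L.neg_mem hf) hg
  have h2 : 1 - (((1 - f) - g) ⊔ 0) ∈ L.EvSet := L.neg_mem h1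
  convert h2 using 1
  ext v
  simp only [ContinuousMap.inf_apply, ContinuousMap.add_apply, ContinuousMap.one_apply,
    ContinuousMap.sub_apply, ContinuousMap.sup_apply, ContinuousMap.zero_apply]
  rw [← real1 (f v) (g v)]

lemma CPL.sup_mem {f g : C(L.StoneSpace, ℝ)} (hf : f ∈ L.EvSet) (hg : g ∈ L.EvSet) :
    f ⊔ g ∈ L.EvSet := by
  have h1 : ((f - g) ⊔ 0 + g) ⊓ 1 ∈ L.EvSet := L.tadd_mem (L.tsub_mem hf hg) hg
  convert h1 using 1
  ext v
  simp only [ContinuousMap.sup_apply, ContinuousMap.inf_apply, ContinuousMap.add_apply,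
    ContinuousMap.sub_apply, ContinuousMap.zero_apply, ContinuousMap.one_apply]
  exact real2 (f v) (g v) (L.mem_Icc_of_EvSet hf v).2 (L.mem_Icc_of_EvSet hg v).2

lemma CPL.inf_mem {f g : C(L.StoneSpace, ℝ)} (hf : f ∈ L.EvSet) (hg : g ∈ L.EvSet) :
    f ⊓ g ∈ L.EvSet := by
  have h1 : 1 - ((1 - f) ⊔ (1 - g)) ∈ L.EvSet :=
    L.neg_mem (L.sup_mem (L.neg_mem hf) (L.neg_mem hg))
  convert h1 using 1
  ext v
  simp only [ContinuousMap.inf_apply, ContinuousMap.sub_apply, ContinuousMap.one_apply,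
    ContinuousMap.sup_apply]
  rw [← real3 (f v) (g v)]

lemma CPL.dyadic_mem [Nonempty S] :
    ∀ n k : ℕ, k ≤ 2 ^ n →
      ContinuousMap.const L.StoneSpace ((k : ℝ) / 2 ^ n) ∈ L.EvSet := by
  intro n
  induction n with
  | zero =>
    intro k hk
    interval_cases k
    · convert L.neg_mem L.one_mem using 1
      ext v; simp
    · convert L.one_mem using 1
      ext v; simp
  | succ n ih =>
    have half_ih : ∀ k : ℕ, k ≤ 2 ^ n →
        ContinuousMap.const L.StoneSpace ((k : ℝ) / 2 ^ (n + 1)) ∈ L.EvSet := by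
      intro k hk
      convert L.half_mem (ih k hk) using 1
      ext v
      simp only [ContinuousMap.const_apply, ContinuousMap.smul_apply, smul_eq_mul]
      rw [pow_succ]
      ring
    intro k hk
    rcases le_or_gt k (2 ^ n) with h | h
    · exact half_ih k h
    · have hm : 2 ^ (n + 1) - k ≤ 2 ^ n := by
        have : (2:ℕ) ^ (n + 1) = 2 ^ n + 2 ^ n := by rw [pow_succ]; ring
        omega
      have hmem := L.neg_mem (half_ih (2 ^ (n + 1) - k) hm)
      convert hmem using 1
      ext v
      simp only [ContinuousMap.const_apply, ContinuousMap.sub_apply, ContinuousMap.one_apply]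
      rw [Nat.cast_sub hk]
      push_cast
      have h2 : (0:ℝ) < 2 ^ (n+1) := by positivity
      field_simp
      ring
  
end Ops

section Closure

variable {X : Type*} [TopologicalSpace X] [CompactSpace X]

private lemma contSup : Continuous fun p : C(X, ℝ) × C(X, ℝ) => p.1 ⊔ p.2 := by
  rw [Metric.continuous_iff]
  intro p ε hε
  refine ⟨ε, hε, fun q hq => ?_⟩
  rw [ContinuousMap.dist_lt_iff hε]
  intro x
  have h1 : dist (q.1 x) (p.1 x) < ε :=
    lt_of_le_of_lt (ContinuousMap.dist_apply_le_dist x) (lt_of_le_of_lt (by rw [Prod.dist_eq]; exact le_max_left _ _) hq)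
  have h2 : dist (q.2 x) (p.2 x) < ε :=
    lt_of_le_of_lt (ContinuousMap.dist_apply_le_dist x) (lt_of_le_of_lt (by rw [Prod.dist_eq]; exact le_max_right _ _) hq)
  calc dist ((q.1 ⊔ q.2) x) ((p.1 ⊔ p.2) x)
      = |max (q.1 x) (q.2 x) - max (p.1 x) (p.2 x)| := by
        simp [ContinuousMap.sup_apply, Real.dist_eq, max_def]
    _ ≤ max |q.1 x - p.1 x| |q.2 x - p.2 x| := abs_max_sub_max_le_max _ _ _ _
    _ < ε := max_lt (by rw [Real.dist_eq] at h1; exact h1) (by rw [Real.dist_eq] at h2; exact h2)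

private lemma contInf : Continuous fun p : C(X, ℝ) × C(X, ℝ) => p.1 ⊓ p.2 := by
  have heq : (fun p : C(X, ℝ) × C(X, ℝ) => p.1 ⊓ p.2)
      = fun p : C(X, ℝ) × C(X, ℝ) => -((-p.1) ⊔ (-p.2)) := by
    funext p
    ext x
    simp only [ContinuousMap.inf_apply, ContinuousMap.neg_apply, ContinuousMap.sup_apply]
    rcases le_total (p.1 x) (p.2 x) with h | h
    · rw [min_eq_left h, max_eq_left (by linarith)]; ring
    · rw [min_eq_right h, max_eq_right (by linarith)]; ring
  rw [heq]
  exact (contSup.comp ((continuous_fst.neg).prodMk (continuous_snd.neg))).neg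

end Closure

section KOps

variable (L : CPL S)

lemma CPL.K_sup {f g : C(L.StoneSpace, ℝ)} (hf : f ∈ L.KSet) (hg : g ∈ L.KSet) :
    f ⊔ g ∈ L.KSet :=
  map_mem_closure₂ contSup hf hg fun _ ha _ hb => L.sup_mem ha hb

lemma CPL.K_inf {f g : C(L.StoneSpace, ℝ)} (hf : f ∈ L.KSet) (hg : g ∈ L.KSet) :
    f ⊓ g ∈ L.KSet :=
  map_mem_closure₂ contInf hf hg fun _ ha _ hb => L.inf_mem ha hb

lemma CPL.K_tadd {f g : C(L.StoneSpace, ℝ)} (hf : f ∈ L.KSet) (hg : g ∈ L.KSet) :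
    (f + g) ⊓ 1 ∈ L.KSet := by
  have hc : Continuous (Function.uncurry fun a b : C(L.StoneSpace, ℝ) => (a + b) ⊓ 1) := by
    exact contInf.comp ((continuous_fst.add continuous_snd).prodMk continuous_const)
  exact map_mem_closure₂ (f := fun a b : C(L.StoneSpace, ℝ) => (a + b) ⊓ 1) hc hf hg
    fun _ ha _ hb => L.tadd_mem ha hb

lemma CPL.K_tsub {f g : C(L.StoneSpace, ℝ)} (hf : f ∈ L.KSet) (hg : g ∈ L.KSet) :
    (f - g) ⊔ 0 ∈ L.KSet := by
  have hc : Continuous (Function.uncurry fun a b : C(L.StoneSpace, ℝ) => (a - b) ⊔ 0) := by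
    exact contSup.comp ((continuous_fst.sub continuous_snd).prodMk continuous_const)
  exact map_mem_closure₂ (f := fun a b : C(L.StoneSpace, ℝ) => (a - b) ⊔ 0) hc hf hg
    fun _ ha _ hb => L.tsub_mem ha hb

lemma CPL.K_neg {g : C(L.StoneSpace, ℝ)} (hg : g ∈ L.KSet) : 1 - g ∈ L.KSet := by
  have hc : Continuous fun a : C(L.StoneSpace, ℝ) => 1 - a := continuous_const.sub continuous_id
  exact map_mem_closure hc hg fun _ ha => L.neg_mem ha

lemma CPL.eC_mem_K (φ : S) : L.eC φ ∈ L.KSet := subset_closure ⟨φ, rfl⟩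

lemma CPL.const_mem_K [Nonempty S] {c : ℝ} (hc : c ∈ Set.Icc (0:ℝ) 1) :
    ContinuousMap.const L.StoneSpace c ∈ L.KSet := by
  rw [CPL.KSet, Metric.mem_closure_iff]
  intro ε hε
  obtain ⟨n, hn⟩ := exists_pow_lt_of_lt_one hε (by norm_num : (1:ℝ)/2 < 1)
  have h2n : (0:ℝ) < 2 ^ n := by positivity
  have hpow : ((1:ℝ)/2) ^ n = 1 / 2 ^ n := by rw [div_pow, one_pow]
  set k : ℕ := ⌊c * 2 ^ n⌋₊ with hk
  have hk2 : k ≤ 2 ^ n := by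
    have : c * 2 ^ n ≤ (2:ℝ) ^ n := by nlinarith [hc.2]
    calc k ≤ ⌊(2:ℝ) ^ n⌋₊ := Nat.floor_le_floor this
      _ = 2 ^ n := by
          rw [show ((2:ℝ) ^ n) = ((2 ^ n : ℕ) : ℝ) by push_cast; ring, Nat.floor_natCast]
  have hfl : (k : ℝ) ≤ c * 2 ^ n := Nat.floor_le (by nlinarith [hc.1])
  have hfu : c * 2 ^ n < k + 1 := Nat.lt_floor_add_one _
  refine ⟨ContinuousMap.const L.StoneSpace ((k : ℝ) / 2 ^ n), L.dyadic_mem n k hk2, ?_⟩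
  rw [ContinuousMap.dist_lt_iff hε]
  intro x
  simp only [ContinuousMap.const_apply, Real.dist_eq]
  rw [hpow] at hn
  have hle : (k : ℝ) / 2 ^ n ≤ c := by
    rw [div_le_iff₀ h2n]
    linarith
  have hub : c - (k : ℝ) / 2 ^ n < 1 / 2 ^ n := by
    have heq : c - (k : ℝ) / 2 ^ n = (c * 2 ^ n - k) / 2 ^ n := by field_simp
    rw [heq]
    have hnum : c * 2 ^ n - k < 1 := by linarith
    exact (div_lt_div_iff_of_pos_right h2n).mpr hnum
  rw [abs_lt]
  exact ⟨by linarith, by linarith⟩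

end KOps

section Interp

variable (L : CPL S) [Nonempty S]

lemma CPL.indicator_lt {x y : L.StoneSpace} (φ : S) (hlt : x.1 φ < y.1 φ) :
    ∃ g ∈ L.KSet, g x = 0 ∧ g y = 1 := by
  set s := x.1 φ with hs
  set t := y.1 φ with ht
  set d := t - s with hd
  have hd0 : 0 < d := sub_pos.mpr hlt
  have hsIcc : s ∈ Set.Icc (0:ℝ) 1 := x.2.1 φ
  set h : C(L.StoneSpace, ℝ) := (L.eC φ - ContinuousMap.const _ s) ⊔ 0 with hh
  have hK : h ∈ L.KSet := L.K_tsub (L.eC_mem_K φ) (L.const_mem_K hsIcc)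
  have hx0 : h x = 0 := by
    simp only [hh, ContinuousMap.sup_apply, ContinuousMap.sub_apply,
      ContinuousMap.const_apply, ContinuousMap.zero_apply, CPL.eC_apply, ← hs]
    rw [sub_self, max_self]
  have hyd : h y = d := by
    simp only [hh, ContinuousMap.sup_apply, ContinuousMap.sub_apply,
      ContinuousMap.const_apply, ContinuousMap.zero_apply, CPL.eC_apply, ← ht]
    rw [max_eq_left hd0.le, hd]
  have key : ∀ n : ℕ, ∃ g ∈ L.KSet, g x = 0 ∧ g y = min ((n : ℝ) * d) 1 := by
    intro n
    induction n with
    | zero =>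
      refine ⟨ContinuousMap.const _ 0, L.const_mem_K (by norm_num), by simp, by simp⟩
    | succ n ih =>
      obtain ⟨g, hgK, hgx, hgy⟩ := ih
      refine ⟨(g + h) ⊓ 1, L.K_tadd hgK hK, ?_, ?_⟩
      · simp [ContinuousMap.inf_apply, ContinuousMap.add_apply, hgx, hx0]
      · simp only [ContinuousMap.inf_apply, ContinuousMap.add_apply, ContinuousMap.one_apply,
          hgy, hyd]
        rw [real4 d hd0.le n]
        push_cast
        ring_nf
  obtain ⟨n, hn⟩ := exists_nat_ge (1 / d)
  have h1 : 1 ≤ (n : ℝ) * d := by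
    rw [div_le_iff₀ hd0] at hn
    linarith
  obtain ⟨g, hgK, hgx, hgy⟩ := key n
  exact ⟨g, hgK, hgx, by rw [hgy, min_eq_right h1]⟩

lemma CPL.indicator {x y : L.StoneSpace} (hxy : x ≠ y) :
    ∃ g ∈ L.KSet, g x = 0 ∧ g y = 1 := by
  have hex : ∃ φ, x.1 φ ≠ y.1 φ := by
    by_contra hcon
    push_neg at hcon
    exact hxy (Subtype.ext (funext hcon))
  obtain ⟨φ, hφ⟩ := hex
  rcases hφ.lt_or_gt with hlt | hlt
  · exact L.indicator_lt φ hlt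
  · obtain ⟨g, hgK, hgy, hgx⟩ := L.indicator_lt φ hlt
    refine ⟨1 - g, L.K_neg hgK, ?_, ?_⟩
    · simp [hgx]
    · simp [hgy]

lemma CPL.sep (f : C(L.StoneSpace, ℝ)) (hf : ∀ v, f v ∈ Set.Icc (0:ℝ) 1) (x y : L.StoneSpace) :
    ∃ g ∈ L.KSet, g x = f x ∧ g y = f y := by
  by_cases hxy : x = y
  · subst hxy
    exact ⟨ContinuousMap.const _ (f x), L.const_mem_K (hf x), by simp, by simp⟩
  have ha := hf x
  have hb := hf y
  rcases le_total (f x) (f y) with hab | hab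
  · obtain ⟨g₀, hK, h0, h1⟩ := L.indicator hxy
    refine ⟨ContinuousMap.const _ (f x) ⊔ (g₀ ⊓ ContinuousMap.const _ (f y)),
      L.K_sup (L.const_mem_K ha) (L.K_inf hK (L.const_mem_K hb)), ?_, ?_⟩
    · simp only [ContinuousMap.sup_apply, ContinuousMap.inf_apply, ContinuousMap.const_apply,
        h0]
      rw [min_eq_left hb.1, max_eq_left ha.1]
    · simp only [ContinuousMap.sup_apply, ContinuousMap.inf_apply, ContinuousMap.const_apply,
        h1]
      rw [min_eq_right hb.2, max_eq_right hab]
  · obtain ⟨g₀, hK, h0, h1⟩ := L.indicator (Ne.symm hxy)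
    refine ⟨ContinuousMap.const _ (f y) ⊔ (g₀ ⊓ ContinuousMap.const _ (f x)),
      L.K_sup (L.const_mem_K hb) (L.K_inf hK (L.const_mem_K ha)), ?_, ?_⟩
    · simp only [ContinuousMap.sup_apply, ContinuousMap.inf_apply, ContinuousMap.const_apply,
        h1]
      rw [min_eq_right ha.2, max_eq_right hab]
    · simp only [ContinuousMap.sup_apply, ContinuousMap.inf_apply, ContinuousMap.const_apply,
        h0]
      rw [min_eq_left ha.1, max_eq_left hb.1]

lemma CPL.mem_K (f : C(L.StoneSpace, ℝ)) (hf : ∀ v, f v ∈ Set.Icc (0:ℝ) 1) :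
    f ∈ L.KSet := by
  by_cases nX : Nonempty L.StoneSpace
  swap
  · refine subset_closure ⟨Classical.arbitrary S, ?_⟩
    ext v
    exact (nX ⟨v⟩).elim
  have hcl : f ∈ closure L.KSet := by
    rw [Metric.mem_closure_iff]
    intro ε hε
    choose g hg w₁ w₂ using L.sep f hf
    -- U x y is a nbhd of y on which g x y > f - ε
    let U : L.StoneSpace → L.StoneSpace → Set L.StoneSpace :=
      fun x y => {z | f z - ε < g x y z}
    have U_nhd_y : ∀ x y, U x y ∈ nhds y := by
      intro x y
      refine IsOpen.mem_nhds ?_ ?_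
      · exact isOpen_lt (f.continuous.sub continuous_const) (g x y).continuous
      · rw [Set.mem_setOf_eq, w₂]
        exact sub_lt_self _ hε
    let ys : L.StoneSpace → Finset L.StoneSpace :=
      fun x => (CompactSpace.elim_nhds_subcover (U x) (U_nhd_y x)).choose
    have ys_w : ∀ x, ⋃ y ∈ ys x, U x y = ⊤ := fun x =>
      (CompactSpace.elim_nhds_subcover (U x) (U_nhd_y x)).choose_spec
    have ys_nonempty : ∀ x, (ys x).Nonempty := fun x =>
      Set.nonempty_of_union_eq_top_of_nonempty _ _ nX (ys_w x)
    let h : L.StoneSpace → C(L.StoneSpace, ℝ) :=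
      fun x => (ys x).sup' (ys_nonempty x) fun y => g x y
    have h_mem : ∀ x, h x ∈ L.KSet := fun x =>
      Finset.sup'_mem L.KSet (fun a ha b hb => L.K_sup ha hb) _ _ _ fun y _ => hg x y
    have lt_h : ∀ x z, f z - ε < h x z := by
      intro x z
      obtain ⟨y, ym, zm⟩ := Set.exists_set_mem_of_union_eq_top _ _ (ys_w x) z
      simp only [h, ContinuousMap.sup'_apply, Finset.lt_sup'_iff]
      exact ⟨y, ym, zm⟩
    have h_eq : ∀ x, h x x = f x := by
      intro x
      simp only [h, ContinuousMap.sup'_apply]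
      rw [Finset.sup'_congr (ys_nonempty x) rfl fun y _ => w₁ x y]
      exact Finset.sup'_const _ _
    let W : L.StoneSpace → Set L.StoneSpace := fun x => {z | h x z < f z + ε}
    have W_nhd : ∀ x, W x ∈ nhds x := by
      intro x
      refine IsOpen.mem_nhds ?_ ?_
      · exact isOpen_lt (h x).continuous (f.continuous.add continuous_const)
      · rw [Set.mem_setOf_eq, h_eq]
        exact lt_add_of_pos_right _ hε
    obtain ⟨xs, xs_w⟩ := CompactSpace.elim_nhds_subcover W W_nhd
    have xs_nonempty : xs.Nonempty :=
      Set.nonempty_of_union_eq_top_of_nonempty _ _ nX xs_w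
    refine ⟨xs.inf' xs_nonempty h,
      Finset.inf'_mem L.KSet (fun a ha b hb => L.K_inf ha hb) _ _ _ fun x _ => h_mem x, ?_⟩
    rw [ContinuousMap.dist_lt_iff hε]
    intro z
    rw [Real.dist_eq, abs_sub_lt_iff]
    constructor
    · have : f z - ε < (xs.inf' xs_nonempty h) z := by
        rw [ContinuousMap.inf'_apply, Finset.lt_inf'_iff]
        exact fun x _ => lt_h x z
      linarith
    · obtain ⟨x, xm, zm⟩ := Set.exists_set_mem_of_union_eq_top _ _ xs_w z
      have : (xs.inf' xs_nonempty h) z < f z + ε := by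
        rw [ContinuousMap.inf'_apply, Finset.inf'_lt_iff]
        exact ⟨x, xm, zm⟩
      linarith
  rw [CPL.KSet] at hcl ⊢
  rwa [closure_closure] at hcl

end Interp

/-- Properties of the Stone space of a continuous propositional logic:
(1) it is compact Hausdorff; (2) each `φ̂` is continuous and `θ : φ ↦ φ̂` respects the
connectives; (3) `φ̂ = ψ̂` iff `v(φ) = v(ψ)` for every truth assignment `v`; (4) the image
of `θ` is dense in `C(S̃, [0,1])` for the uniform metric. -/
theorem stone_space_properties [Nonempty S] (L : CPL S) :
    CompactSpace L.StoneSpace ∧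
    T2Space L.StoneSpace ∧
    (∀ φ : S, Continuous (L.evalAt φ)) ∧
    (∀ (φ : S) (v : L.StoneSpace), L.evalAt (L.neg φ) v = 1 - L.evalAt φ v) ∧
    (∀ (φ : S) (v : L.StoneSpace), L.evalAt (L.half φ) v = L.evalAt φ v / 2) ∧
    (∀ (φ ψ : S) (v : L.StoneSpace),
      L.evalAt (L.sub φ ψ) v = max (L.evalAt φ v - L.evalAt ψ v) 0) ∧
    (∀ φ ψ : S, L.evalAt φ = L.evalAt ψ ↔ ∀ v : L.StoneSpace, v.1 φ = v.1 ψ) ∧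
    (∀ f : C(L.StoneSpace, ℝ), (∀ v, f v ∈ Set.Icc (0 : ℝ) 1) →
      ∀ ε : ℝ, 0 < ε → ∃ φ : S, ∀ v : L.StoneSpace, |f v - L.evalAt φ v| ≤ ε) := by
  refine ⟨inferInstance, inferInstance, L.continuous_evalAt,
    fun φ v => v.2.2.1 φ, fun φ v => v.2.2.2.1 φ, fun φ ψ v => v.2.2.2.2 φ ψ,
    fun φ ψ => ⟨fun h v => congrFun h v, fun h => funext h⟩, ?_⟩
  intro f hf ε hε
  have hfK := L.mem_K f hf
  rw [CPL.KSet, Metric.mem_closure_iff] at hfK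
  obtain ⟨g, hgE, hdist⟩ := hfK ε hε
  obtain ⟨φ, rfl⟩ := hgE
  refine ⟨φ, fun v => ?_⟩
  have h1 : dist (f v) (L.eC φ v) ≤ dist f (L.eC φ) := ContinuousMap.dist_apply_le_dist v
  rw [Real.dist_eq] at h1
  calc |f v - L.evalAt φ v| = |f v - L.eC φ v| := rfl
    _ ≤ dist f (L.eC φ) := h1
    _ ≤ ε := hdist.le


end Stmt9
end

section
/- In the Łukasiewicz logic generated by a single atomic proposition P, let φ_n = 1 ∸ 2(1 ∸ nP) (i.e. (1 ∸ nP reduced twice from 1), where 1 abbreviates ¬(P∸P)) and Σ = {φ_n : n ∈ ℕ, n ≥ 1}. Then for every truth assignment v, v(φ_n) = 0 if and only if v(P) ≤ 1/(2n); consequently Σ ⊨ P, but there is no finite subset Σ₀ ⊆ Σ with Σ₀ ⊨ P. -/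
namespace Stmt10

/-- Formulas of Łukasiewicz logic generated by atomic propositions indexed by `I`. -/
inductive LukFormula (I : Type*) : Type _ where
  | atom : I → LukFormula I
  | neg : LukFormula I → LukFormula I
  | sub : LukFormula I → LukFormula I → LukFormula I

namespace LukFormula

variable {I : Type*}

/-- The truth value of a formula under an assignment of truth values to the atoms. -/
def eval (v : I → ℝ) : LukFormula I → ℝ
  | atom i => v i
  | neg φ => 1 - eval v φ
  | sub φ ψ => max (eval v φ - eval v ψ) 0

/-- `nsub ψ n φ` is `ψ ∸ nφ`. -/
def nsub (ψ : LukFormula I) : ℕ → LukFormula I → LukFormula I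
  | 0, _ => ψ
  | n + 1, φ => sub (nsub ψ n φ) φ

/-- A truth assignment is determined by the truth values of the atoms, in `[0,1]`. -/
def IsAssignment (v : I → ℝ) : Prop := ∀ i, v i ∈ Set.Icc (0 : ℝ) 1

end LukFormula

open LukFormula

/-- The single atomic proposition `P`. -/
def P : LukFormula Unit := .atom ()

/-- `1` abbreviates `¬(P ∸ P)`. -/
def one : LukFormula Unit := .neg (.sub P P)

/-- `φ_n = 1 ∸ 2(1 ∸ nP)`. -/
def phi (n : ℕ) : LukFormula Unit := nsub one 2 (nsub one n P)

lemma max_sub_aux (a p : ℝ) (hp : 0 ≤ p) : max (max a 0 - p) 0 = max (a - p) 0 := by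
  rcases le_total a 0 with h | h
  · rw [max_eq_right h, max_eq_right (by linarith), max_eq_right (by linarith)]
  · rw [max_eq_left h]

lemma eval_nsub (v : Unit → ℝ) (hv : IsAssignment v) (n : ℕ) :
    eval v (nsub one n P) = max (1 - n * v ()) 0 := by
  induction n with
  | zero => simp [nsub, one, P, eval]
  | succ n ih =>
    have hp := (hv ()).1
    simp only [nsub, eval]
    rw [ih, show eval v P = v () from rfl, max_sub_aux _ _ hp]
    congr 1
    push_cast
    ring

lemma eval_phi (n : ℕ) (hn : 1 ≤ n) (v : Unit → ℝ) (hv : IsAssignment v) :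
    eval v (phi n) = 0 ↔ v () ≤ 1 / (2 * (n : ℝ)) := by
  have hp0 := (hv ()).1
  have hn' : (1 : ℝ) ≤ n := by exact_mod_cast hn
  have hone : eval v one = 1 := by simp [one, P, eval]
  have key : eval v (phi n) = max (1 - 2 * max (1 - n * v ()) 0) 0 := by
    have e1 : eval v (phi n) =
        max (max (eval v one - eval v (nsub one n P)) 0 - eval v (nsub one n P)) 0 := rfl
    rw [e1, hone, eval_nsub v hv]
    have hx : max (1 - (n : ℝ) * v ()) 0 ≤ 1 :=
      max_le (by nlinarith) zero_le_one
    have h2 : max ((1 : ℝ) - max (1 - (n:ℝ) * v ()) 0) 0 = 1 - max (1 - (n:ℝ) * v ()) 0 :=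
      max_eq_left (by linarith)
    rw [h2]
    congr 1
    ring
  rw [key, le_div_iff₀ (by positivity)]
  rcases le_total (1 - (n : ℝ) * v ()) 0 with h | h
  · rw [max_eq_right h, mul_zero, sub_zero, max_eq_left zero_le_one]
    constructor
    · intro h1; exact absurd h1 one_ne_zero
    · intro h1; exfalso; nlinarith
  · rw [max_eq_left h, max_eq_right_iff]
    constructor <;> intro <;> nlinarith

/-- With `Σ = {φ_n : n ≥ 1}`: for every truth assignment `v`, `v(φ_n) = 0` iff
`v(P) ≤ 1/(2n)`; consequently `Σ ⊨ P`, yet no finite subset `Σ₀ ⊆ Σ` satisfies `Σ₀ ⊨ P`. -/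
theorem infinitary_entailment :
    (∀ n : ℕ, 1 ≤ n → ∀ v : Unit → ℝ, IsAssignment v →
      (eval v (phi n) = 0 ↔ v () ≤ 1 / (2 * (n : ℝ)))) ∧
    (∀ v : Unit → ℝ, IsAssignment v →
      (∀ n : ℕ, 1 ≤ n → eval v (phi n) = 0) → eval v P = 0) ∧
    ¬ ∃ Γ₀ : Set (LukFormula Unit),
        Γ₀ ⊆ {ψ : LukFormula Unit | ∃ n : ℕ, 1 ≤ n ∧ ψ = phi n} ∧ Γ₀.Finite ∧
        ∀ v : Unit → ℝ, IsAssignment v → (∀ ψ ∈ Γ₀, eval v ψ = 0) → eval v P = 0 := by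
  refine ⟨fun n hn v hv => eval_phi n hn v hv, ?_, ?_⟩
  · intro v hv hall
    have hp0 := (hv ()).1
    show v () = 0
    by_contra hne
    have hp : 0 < v () := lt_of_le_of_ne hp0 (Ne.symm hne)
    obtain ⟨m, hm⟩ := exists_nat_gt (1 / (2 * v ()))
    have hmpos : 1 ≤ m := by
      have h2 : (0:ℝ) < 1 / (2 * v ()) := by positivity
      have h3 : (0:ℝ) < m := h2.trans hm
      have : 0 < m := by exact_mod_cast h3
      omega
    have h1 := (eval_phi m hmpos v hv).mp (hall m hmpos)
    rw [le_div_iff₀ (by positivity)] at h1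
    rw [div_lt_iff₀ (by positivity)] at hm
    nlinarith
  · rintro ⟨Γ₀, hsub, hfin, hmod⟩
    classical
    let f : LukFormula Unit → ℕ := fun ψ =>
      if h : ∃ n : ℕ, 1 ≤ n ∧ ψ = phi n then h.choose else 1
    have hf : ∀ ψ ∈ Γ₀, 1 ≤ f ψ ∧ ψ = phi (f ψ) := by
      intro ψ hψ
      have h := hsub hψ
      have hfe : f ψ = h.choose := by simp only [f]; exact dif_pos h
      rw [hfe]
      exact h.choose_spec
    set N : ℕ := max ((hfin.toFinset.image f).sup id) 1 with hN
    have hN1 : 1 ≤ N := le_max_right _ _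
    have hNR : (1:ℝ) ≤ N := by exact_mod_cast hN1
    have hfN : ∀ ψ ∈ Γ₀, f ψ ≤ N := by
      intro ψ hψ
      refine le_trans ?_ (le_max_left _ _)
      exact Finset.le_sup (f := id) (Finset.mem_image_of_mem f (hfin.mem_toFinset.mpr hψ))
    set ε : ℝ := 1 / (2 * N) with hε
    have hε0 : 0 < ε := by positivity
    have hε1 : ε ≤ 1 := by
      rw [hε, div_le_one (by positivity)]
      linarith
    have hass : IsAssignment (fun _ : Unit => ε) := fun _ => ⟨le_of_lt hε0, hε1⟩
    have hzero : ∀ ψ ∈ Γ₀, eval (fun _ => ε) ψ = 0 := by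
      intro ψ hψ
      obtain ⟨h1, h2⟩ := hf ψ hψ
      rw [h2]
      refine (eval_phi (f ψ) h1 _ hass).mpr ?_
      have hfψ : (1:ℝ) ≤ f ψ := by exact_mod_cast h1
      have hfψN : (f ψ : ℝ) ≤ N := by exact_mod_cast hfN ψ hψ
      rw [hε]
      exact one_div_le_one_div_of_le (by positivity) (by linarith)
    have := hmod (fun _ => ε) hass hzero
    simp [P, eval] at this
    exact absurd this (ne_of_gt hε0)

end Stmt10
end

section
/- Let (Ω, F, μ) be a probability space and let M = L¹(F, [0,1]). For every sub-σ-algebra F₁ ⊆ F, the subset L¹(F₁, [0,1]) ⊆ M contains 0, is closed under the operations ¬, ½, ∸, and is closed in the L¹ metric. Conversely, if N ⊆ M is nonempty, contains 0, is closed under ¬, ½ and ∸, and is closed in the L¹ metric, then there is a sub-σ-algebra G ⊆ F (containing all μ-null sets) such that N is exactly the set of elements of M admitting a G-measurable representative, namely G = σ(N), the smallest such σ-algebra making every member of N measurable. -/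
namespace Stmt15

open MeasureTheory Set

/-- The set of (representatives of) elements of `L¹(G, [0,1])` inside `L¹(F, [0,1])`:
`F`-measurable `[0,1]`-valued functions admitting a `G`-measurable representative
modulo `μ`-null sets. -/
def RVSet {Ω : Type*} (F : MeasurableSpace Ω) (μ : @Measure Ω F)
    (G : MeasurableSpace Ω) : Set (Ω → ℝ) :=
  {f | Measurable[F] f ∧ (∀ ω, f ω ∈ Icc (0 : ℝ) 1) ∧
    ∃ g : Ω → ℝ, Measurable[G] g ∧ f =ᵐ[μ] g}

section Aux

open Filter

set_option linter.unusedSectionVars false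

variable {Ω : Type*} [F : MeasurableSpace Ω] {μ : Measure Ω} [IsProbabilityMeasure μ]
  {N : Set (Ω → ℝ)}

/-- helper: bounded measurable functions are integrable on a probability space -/
lemma integrable_of_bdd {h : Ω → ℝ} (hm : Measurable h) {C : ℝ} (hb : ∀ ω, |h ω| ≤ C) :
    Integrable h μ :=
  (integrable_const C).mono' hm.aestronglyMeasurable (ae_of_all _ fun ω => by
    simpa [Real.norm_eq_abs] using hb ω)

structure Good (μ : Measure Ω) (N : Set (Ω → ℝ)) : Prop where
  meas : ∀ f ∈ N, Measurable f
  icc : ∀ f ∈ N, ∀ ω, f ω ∈ Icc (0:ℝ) 1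
  zero : (fun _ => (0:ℝ)) ∈ N
  neg : ∀ f ∈ N, (fun ω => 1 - f ω) ∈ N
  half : ∀ f ∈ N, (fun ω => f ω / 2) ∈ N
  tsub : ∀ f g : Ω → ℝ, f ∈ N → g ∈ N → (fun ω => max (f ω - g ω) 0) ∈ N
  closed : ∀ f : Ω → ℝ, Measurable f → (∀ ω, f ω ∈ Icc (0:ℝ) 1) →
    (∀ ε : ℝ, 0 < ε → ∃ g ∈ N, ∫ ω, |f ω - g ω| ∂μ < ε) → f ∈ N

namespace Good

variable (hN : Good μ N)
include hN

lemma one : (fun _ : Ω => (1:ℝ)) ∈ N := by simpa using hN.neg _ hN.zero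

lemma integrableMem {f : Ω → ℝ} (hf : f ∈ N) : Integrable f μ :=
  integrable_of_bdd (hN.meas f hf) (C := 1) (fun ω => by
    have h := hN.icc f hf ω; rw [abs_le]; exact ⟨by linarith [h.1], h.2⟩)

lemma aeClosed {f g : Ω → ℝ} (hf : f ∈ N) (hg : Measurable g)
    (hg1 : ∀ ω, g ω ∈ Icc (0:ℝ) 1) (he : g =ᵐ[μ] f) : g ∈ N := by
  refine hN.closed g hg hg1 fun ε hε => ⟨f, hf, ?_⟩
  have h0 : (fun ω => |g ω - f ω|) =ᵐ[μ] (fun _ => (0:ℝ)) :=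
    he.mono fun ω h => by simp [h]
  rw [integral_congr_ae h0, integral_zero]
  exact hε

lemma closed_of_tendsto {f : Ω → ℝ} (hfm : Measurable f) (hf1 : ∀ ω, f ω ∈ Icc (0:ℝ) 1)
    {g : ℕ → Ω → ℝ} (hg : ∀ n, g n ∈ N)
    (hconv : ∀ ω, Tendsto (fun n => g n ω) atTop (nhds (f ω))) : f ∈ N := by
  refine hN.closed f hfm hf1 fun ε hε => ?_
  have hT : Tendsto (fun n => ∫ ω, |f ω - g n ω| ∂μ) atTop (nhds (∫ _ : Ω, (0:ℝ) ∂μ)) := by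
    refine tendsto_integral_of_dominated_convergence (fun _ => (2:ℝ))
      (fun n => ((hfm.sub (hN.meas _ (hg n))).abs).aestronglyMeasurable)
      (integrable_const _) (fun n => ae_of_all _ fun ω => ?_) (ae_of_all _ fun ω => ?_)
    · have h1 := hf1 ω; have h2 := hN.icc _ (hg n) ω
      rw [Real.norm_eq_abs, abs_abs]
      show |f ω - g n ω| ≤ 2
      rw [abs_le]
      constructor <;> [linarith [h1.1, h2.2]; linarith [h1.2, h2.1]]
    · have : Tendsto (fun n => |f ω - g n ω|) atTop (nhds |f ω - f ω|) :=
        (tendsto_const_nhds.sub (hconv ω)).abs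
      simpa using this
  rw [integral_zero] at hT
  obtain ⟨n, hn⟩ := (hT.eventually_lt_const hε).exists
  exact ⟨g n, hg n, hn⟩

lemma truncAdd {f g : Ω → ℝ} (hf : f ∈ N) (hg : g ∈ N) :
    (fun ω => min (f ω + g ω) 1) ∈ N := by
  have h : (fun ω => 1 - max ((1 - f ω) - g ω) 0) ∈ N :=
    hN.neg _ (hN.tsub _ _ (hN.neg f hf) hg)
  have key : (fun ω => 1 - max ((1 - f ω) - g ω) 0) = fun ω => min (f ω + g ω) 1 := by
    funext ω; rcases le_total (f ω + g ω) 1 with h'|h'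
    · rw [max_eq_left (by linarith), min_eq_left h']; ring
    · rw [max_eq_right (by linarith), min_eq_right h']; ring
  rwa [key] at h

lemma divPow {f : Ω → ℝ} (hf : f ∈ N) : ∀ n : ℕ, (fun ω => f ω / 2^n) ∈ N := by
  intro n; induction n with
  | zero => simpa using hf
  | succ n ih =>
    have h : (fun ω => (f ω / 2^n) / 2) ∈ N := hN.half _ ih
    have he : (fun ω => f ω / 2^(n+1)) = fun ω => (f ω / 2^n)/2 := by funext ω; ring
    rwa [he]

lemma constMem (n k : ℕ) (hk : k ≤ 2^n) : (fun _ : Ω => (k:ℝ)/2^n) ∈ N := by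
  induction k with
  | zero => simpa using hN.zero
  | succ k ih =>
    have hk' : k ≤ 2^n := le_of_lt (Nat.lt_of_succ_le hk)
    have h1 : (fun _ : Ω => (1:ℝ)/2^n) ∈ N := hN.divPow hN.one n
    have h2 : (fun _ : Ω => min ((k:ℝ)/2^n + 1/2^n) 1) ∈ N := hN.truncAdd (ih hk') h1
    have hle : ((k:ℝ)+1)/2^n ≤ 1 := by
      rw [div_le_one (by positivity)]
      exact_mod_cast hk
    have he : (fun _ : Ω => min ((k:ℝ)/2^n + 1/2^n) 1) = (fun _ : Ω => ((k+1:ℕ):ℝ)/2^n) := by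
      funext ω
      rw [← add_div, min_eq_left hle]
      push_cast; ring
    rwa [he] at h2

lemma indicatorMem {f : Ω → ℝ} (hf : f ∈ N) {d : ℝ} (hd0 : 0 ≤ d)
    (hdc : (fun _ : Ω => d) ∈ N) :
    Set.indicator {ω | d < f ω} (fun _ => (1:ℝ)) ∈ N := by
  have hxN : (fun ω => max (f ω - d) 0) ∈ N := hN.tsub _ _ hf hdc
  set x : Ω → ℝ := fun ω => max (f ω - d) 0 with hxdef
  have hx01 : ∀ ω, 0 ≤ x ω ∧ x ω ≤ 1 := fun ω =>
    ⟨le_max_right _ _, max_le (by have := (hN.icc f hf ω).2; linarith) zero_le_one⟩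
  have hD : ∀ n : ℕ, (fun ω => min (2^n * x ω) 1) ∈ N := by
    intro n; induction n with
    | zero =>
      have he : (fun ω => min ((2:ℝ)^0 * x ω) 1) = x := by
        funext ω; rw [pow_zero, one_mul, min_eq_left (hx01 ω).2]
      rw [he]; exact hxN
    | succ n ih =>
      have h2 : (fun ω => min (min (2^n * x ω) 1 + min (2^n * x ω) 1) 1) ∈ N :=
        hN.truncAdd ih ih
      have he : (fun ω => min (min (2^n * x ω) 1 + min (2^n * x ω) 1) 1)
          = fun ω => min (2^(n+1) * x ω) 1 := by
        funext ω; rcases le_total ((2:ℝ)^n * x ω) 1 with h|h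
        · rw [min_eq_left h]
          have : (2:ℝ)^n * x ω + 2^n * x ω = 2^(n+1) * x ω := by ring
          rw [this]
        · have h21 : (2:ℝ)^(n+1) * x ω = 2*((2:ℝ)^n * x ω) := by ring
          rw [min_eq_right h, min_eq_right (by norm_num : (1:ℝ) ≤ 1+1),
            min_eq_right (by rw [h21]; linarith)]
      rwa [he] at h2
  have hs : MeasurableSet[F] {ω | d < f ω} := by
    have : {ω | d < f ω} = f ⁻¹' Ioi d := rfl
    rw [this]; exact hN.meas f hf measurableSet_Ioi
  refine hN.closed_of_tendsto (Measurable.indicator measurable_const hs)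
    (fun ω => ?_) hD (fun ω => ?_)
  · by_cases h : ω ∈ {ω | d < f ω} <;>
      simp [Set.indicator_apply, h, zero_le_one, le_refl]
  · by_cases h : d < f ω
    · have hxpos : 0 < x ω := lt_of_lt_of_le (by simp [hxdef]; linarith) le_rfl
      have hev : ∀ᶠ n : ℕ in atTop, min ((2:ℝ)^n * x ω) 1 = 1 := by
        have ht : Tendsto (fun n : ℕ => (2:ℝ)^n) atTop atTop :=
          tendsto_pow_atTop_atTop_of_one_lt one_lt_two
        filter_upwards [ht.eventually_ge_atTop (1 / x ω)] with n hn
        rw [div_le_iff₀ hxpos] at hn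
        rw [min_eq_right (by linarith)]
      rw [Set.indicator_apply, if_pos (show ω ∈ {ω | d < f ω} from h)]
      exact Tendsto.congr' (hev.mono fun n hn => hn.symm) tendsto_const_nhds
    · have hx0 : x ω = 0 := max_eq_right (by push_neg at h; linarith)
      have : ∀ n : ℕ, min ((2:ℝ)^n * x ω) 1 = 0 := fun n => by
        rw [hx0, mul_zero, min_eq_left zero_le_one]
      rw [Set.indicator_apply, if_neg (show ω ∉ {ω | d < f ω} from h)]
      simpa [this] using (tendsto_const_nhds : Tendsto (fun _ : ℕ => (0:ℝ)) atTop (nhds 0))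

end Good

/-- key real-number approximation fact for the dyadic layer-cake sum -/
lemma sum_indicator_approx (n : ℕ) {x : ℝ} (hx0 : 0 ≤ x) : ∀ m : ℕ,
    (((m:ℝ)/2^n < x →
      (∑ i ∈ Finset.range m, if ((i:ℝ)+1)/2^n < x then ((2:ℝ)^n)⁻¹ else 0) = (m:ℝ)/2^n)
    ∧ (x ≤ (m:ℝ)/2^n →
      x - ((2:ℝ)^n)⁻¹ ≤ (∑ i ∈ Finset.range m, if ((i:ℝ)+1)/2^n < x then ((2:ℝ)^n)⁻¹ else 0)
      ∧ (∑ i ∈ Finset.range m, if ((i:ℝ)+1)/2^n < x then ((2:ℝ)^n)⁻¹ else 0) ≤ x)) := by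
  have hpow : (0:ℝ) < 2^n := by positivity
  have hc : ((2:ℝ)^n)⁻¹ = 1/2^n := by rw [one_div]
  intro m; induction m with
  | zero =>
    constructor
    · intro _; simp
    · intro hx; simp only [Finset.range_zero, Finset.sum_empty]
      have : x = 0 := le_antisymm (by simpa using hx) hx0
      constructor
      · rw [this]; simp
      · exact hx0
  | succ m ih =>
    have hstep : ((m:ℝ)+1)/2^n = (m:ℝ)/2^n + ((2:ℝ)^n)⁻¹ := by
      rw [hc]; ring
    have hcast : (((m+1:ℕ)):ℝ) = (m:ℝ)+1 := by push_cast; ring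
    rw [Finset.sum_range_succ, hcast]
    by_cases hcond : ((m:ℝ)+1)/2^n < x
    · rw [if_pos hcond]
      constructor
      · intro _
        have hmx : (m:ℝ)/2^n < x := lt_of_le_of_lt (by gcongr; linarith) hcond
        rw [ih.1 hmx, hstep]
      · intro hx; linarith
    · rw [if_neg hcond, add_zero]
      push_neg at hcond
      constructor
      · intro h; linarith
      · intro _
        by_cases h2 : x ≤ (m:ℝ)/2^n
        · exact ih.2 h2
        · push_neg at h2
          rw [ih.1 h2]
          constructor
          · rw [hstep] at hcond; linarith
          · exact le_of_lt h2

/-- indicator functions take values in `[0,1]` -/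
lemma indIcc (s : Set Ω) (ω : Ω) : Set.indicator s (fun _ => (1:ℝ)) ω ∈ Icc (0:ℝ) 1 := by
  by_cases h : ω ∈ s <;> simp [Set.indicator_apply, h, zero_le_one]

lemma indUnion (s t : Set Ω) :
    Set.indicator (s ∪ t) (fun _ => (1:ℝ))
      = fun ω => min (Set.indicator s (fun _ => (1:ℝ)) ω + Set.indicator t (fun _ => (1:ℝ)) ω) 1 := by
  funext ω
  by_cases hs : ω ∈ s <;> by_cases ht : ω ∈ t <;>
    simp [Set.indicator_apply, hs, ht] <;> norm_num

/-- the σ-algebra generated by a good substructure `N`: sets whose indicator lies in `N` -/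
def sigmaOf (μ : Measure Ω) [IsProbabilityMeasure μ] (N : Set (Ω → ℝ)) (hN : Good μ N) :
    MeasurableSpace Ω where
  MeasurableSet' s := MeasurableSet[F] s ∧ Set.indicator s (fun _ => (1:ℝ)) ∈ N
  measurableSet_empty := ⟨MeasurableSet.empty, by simpa [Set.indicator_empty] using hN.zero⟩
  measurableSet_compl := by
    intro s hs
    refine ⟨hs.1.compl, ?_⟩
    have h : (fun ω => 1 - Set.indicator s (fun _ => (1:ℝ)) ω) ∈ N := hN.neg _ hs.2
    have he : (fun ω => 1 - Set.indicator s (fun _ => (1:ℝ)) ω)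
        = Set.indicator sᶜ (fun _ => (1:ℝ)) := by
      funext ω; by_cases hω : ω ∈ s <;> simp [Set.indicator_apply, hω]
    rwa [he] at h
  measurableSet_iUnion := by
    classical
    intro s hs
    have hpart : ∀ m : ℕ, Set.indicator (⋃ i ∈ Finset.range m, s i) (fun _ => (1:ℝ)) ∈ N := by
      intro m; induction m with
      | zero => simpa using hN.zero
      | succ m ih =>
        have he : (⋃ i ∈ Finset.range (m+1), s i) = (⋃ i ∈ Finset.range m, s i) ∪ s m := by
          rw [Finset.range_add_one, Finset.set_biUnion_insert]
          exact Set.union_comm _ _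
        rw [he, indUnion]
        exact hN.truncAdd ih (hs m).2
    refine ⟨MeasurableSet.iUnion fun i => (hs i).1, ?_⟩
    refine hN.closed_of_tendsto
      (Measurable.indicator measurable_const (MeasurableSet.iUnion fun i => (hs i).1))
      (indIcc _) hpart (fun ω => ?_)
    by_cases h : ω ∈ ⋃ i, s i
    · obtain ⟨i, hi⟩ := Set.mem_iUnion.1 h
      have hev : ∀ᶠ m : ℕ in atTop,
          Set.indicator (⋃ j ∈ Finset.range m, s j) (fun _ => (1:ℝ)) ω = 1 := by
        filter_upwards [eventually_ge_atTop (i+1)] with m hm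
        have hmem : ω ∈ ⋃ j ∈ Finset.range m, s j :=
          Set.mem_biUnion (Finset.mem_range.2 (Nat.lt_of_succ_le hm)) hi
        exact Set.indicator_of_mem hmem _
      rw [Set.indicator_apply, if_pos h]
      exact Tendsto.congr' (hev.mono fun m hm => hm.symm) tendsto_const_nhds
    · have hz : ∀ m : ℕ, Set.indicator (⋃ j ∈ Finset.range m, s j) (fun _ => (1:ℝ)) ω = 0 := by
        intro m
        have hnm : ω ∉ ⋃ j ∈ Finset.range m, s j := fun hc => h (by
          obtain ⟨j, _, hj⟩ := Set.mem_iUnion₂.1 hc; exact Set.mem_iUnion.2 ⟨j, hj⟩)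
        exact Set.indicator_of_notMem hnm _
      rw [Set.indicator_apply, if_neg h]
      exact Tendsto.congr (fun m => (hz m).symm) tendsto_const_nhds

lemma measurableSet_sigmaOf {μ : Measure Ω} [IsProbabilityMeasure μ] {N : Set (Ω → ℝ)}
    {hN : Good μ N} {s : Set Ω} :
    MeasurableSet[sigmaOf μ N hN] s ↔ (MeasurableSet[F] s ∧ Set.indicator s (fun _ => (1:ℝ)) ∈ N) :=
  Iff.rfl

lemma Good.exists_G {μ : Measure Ω} [IsProbabilityMeasure μ] {N : Set (Ω → ℝ)}
    (hN : Good μ N) :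
    ∃ G : MeasurableSpace Ω, G ≤ F ∧
      (∀ s : Set Ω, MeasurableSet[F] s → μ s = 0 → MeasurableSet[G] s) ∧
      N = RVSet F μ G ∧
      ∀ G' : MeasurableSpace Ω, G' ≤ F →
        (∀ s : Set Ω, MeasurableSet[F] s → μ s = 0 → MeasurableSet[G'] s) →
        (∀ f ∈ N, ∃ g : Ω → ℝ, Measurable[G'] g ∧ f =ᵐ[μ] g) → G ≤ G' := by
  classical
  have hGm : ∀ s : Set Ω, MeasurableSet[sigmaOf μ N hN] s ↔
      (MeasurableSet[F] s ∧ Set.indicator s (fun _ => (1:ℝ)) ∈ N) := fun s => Iff.rfl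
  have hGF : sigmaOf μ N hN ≤ F := fun s hs => ((hGm s).1 hs).1
  -- null sets are G-measurable
  have hnull : ∀ s : Set Ω, MeasurableSet[F] s → μ s = 0 → MeasurableSet[sigmaOf μ N hN] s := by
    intro s hsm hs0
    refine (hGm s).2 ⟨hsm, ?_⟩
    have hae : Set.indicator s (fun _ => (1:ℝ)) =ᵐ[μ] (fun _ => (0:ℝ)) := by
      have h := (MeasureTheory.measure_eq_zero_iff_ae_notMem (μ := μ)).1 hs0
      exact h.mono fun ω hω => by simp [Set.indicator_apply, hω]
    exact hN.aeClosed hN.zero (Measurable.indicator measurable_const hsm) (indIcc s) hae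
  -- every member of N is G-measurable
  have hmeasG : ∀ f ∈ N, Measurable[sigmaOf μ N hN] f := by
    intro f hf
    refine measurable_of_Ioi fun t => ?_
    by_cases ht : t < 0
    · have h : f ⁻¹' Ioi t = univ :=
        eq_univ_of_forall fun ω => lt_of_lt_of_le ht (hN.icc f hf ω).1
      rw [h]; exact MeasurableSet.univ
    · push_neg at ht
      have huni : f ⁻¹' Ioi t
          = ⋃ p : ℕ × ℕ, if t < (p.1:ℝ)/2^p.2 ∧ (p.1:ℝ)/2^p.2 ≤ 1
              then f ⁻¹' Ioi ((p.1:ℝ)/2^p.2) else ∅ := by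
        ext ω
        constructor
        · intro hω
          have hω' : t < f ω := hω
          obtain ⟨n, hn⟩ : ∃ n : ℕ, ((2:ℝ)⁻¹)^n < f ω - t :=
            exists_pow_lt_of_lt_one (by linarith) (by norm_num)
          rw [inv_pow] at hn
          set k : ℕ := ⌊t * 2^n⌋₊ + 1 with hk
          have hpow : (0:ℝ) < 2^n := by positivity
          have h1 : t < (k:ℝ)/2^n := by
            rw [lt_div_iff₀ hpow]
            rw [hk]; push_cast
            exact Nat.lt_floor_add_one _
          have h2 : (k:ℝ)/2^n < f ω := by
            rw [div_lt_iff₀ hpow]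
            have hfl := Nat.floor_le (by positivity : (0:ℝ) ≤ t * 2^n)
            have h3 : ((2:ℝ)^n)⁻¹ * 2^n = 1 := inv_mul_cancel₀ (ne_of_gt hpow)
            rw [hk]; push_cast
            nlinarith
          have h3 : (k:ℝ)/2^n ≤ 1 := le_of_lt (lt_of_lt_of_le h2 (hN.icc f hf ω).2)
          refine Set.mem_iUnion.2 ⟨(k, n), ?_⟩
          rw [if_pos ⟨h1, h3⟩]
          exact h2
        · intro hω
          obtain ⟨p, hp⟩ := Set.mem_iUnion.1 hω
          by_cases hc : t < (p.1:ℝ)/2^p.2 ∧ (p.1:ℝ)/2^p.2 ≤ 1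
          · rw [if_pos hc] at hp
            exact lt_trans hc.1 hp
          · rw [if_neg hc] at hp
            exact absurd hp (Set.notMem_empty ω)
      rw [huni]
      refine MeasurableSet.iUnion fun p => ?_
      by_cases hc : t < (p.1:ℝ)/2^p.2 ∧ (p.1:ℝ)/2^p.2 ≤ 1
      · rw [if_pos hc]
        refine (hGm _).2 ⟨hN.meas f hf measurableSet_Ioi, ?_⟩
        have hk2 : p.1 ≤ 2^p.2 := by
          have h := hc.2
          rw [div_le_one (by positivity)] at h
          exact_mod_cast h
        have hd0 : (0:ℝ) ≤ (p.1:ℝ)/2^p.2 := by positivity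
        exact hN.indicatorMem hf hd0 (hN.constMem p.2 p.1 hk2)
      · rw [if_neg hc]; exact @MeasurableSet.empty Ω (sigmaOf μ N hN)
  -- N = RVSet
  have hNsub : N ⊆ RVSet F μ (sigmaOf μ N hN) := fun f hf =>
    ⟨hN.meas f hf, hN.icc f hf, f, hmeasG f hf, Filter.EventuallyEq.rfl⟩
  have hsubN : RVSet F μ (sigmaOf μ N hN) ⊆ N := by
    rintro f ⟨hfm, hf1, g, hgm, hfg⟩
    set g' : Ω → ℝ := fun ω => max 0 (min (g ω) 1) with hg'def
    have hg'm : Measurable[sigmaOf μ N hN] g' :=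
      Measurable.max measurable_const (Measurable.min hgm measurable_const)
    have hfg' : f =ᵐ[μ] g' := hfg.mono fun ω h => by
      simp only [hg'def, ← h, min_eq_left (hf1 ω).2, max_eq_right (hf1 ω).1]
    have hg'1 : ∀ ω, g' ω ∈ Icc (0:ℝ) 1 :=
      fun ω => ⟨le_max_left _ _, max_le zero_le_one (min_le_right _ _)⟩
    refine hN.closed f hfm hf1 fun ε hε => ?_
    obtain ⟨n, hn⟩ : ∃ n : ℕ, ((2:ℝ)^n)⁻¹ < ε := by
      obtain ⟨n, hn⟩ := exists_pow_lt_of_lt_one hε (by norm_num : (2:ℝ)⁻¹ < 1)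
      exact ⟨n, by rwa [inv_pow] at hn⟩
    have hkey : ∀ m : ℕ, m ≤ 2^n →
        (fun ω => ∑ i ∈ Finset.range m,
          if ((i:ℝ)+1)/2^n < g' ω then ((2:ℝ)^n)⁻¹ else 0) ∈ N := by
      intro m
      induction m with
      | zero => intro _; simpa using hN.zero
      | succ m ih =>
        intro hm
        have hm' : m ≤ 2^n := le_of_lt (Nat.lt_of_succ_le hm)
        have hS : MeasurableSet[sigmaOf μ N hN] (g' ⁻¹' Ioi (((m:ℝ)+1)/2^n)) := hg'm measurableSet_Ioi
        have hdiv : (fun ω =>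
            Set.indicator (g' ⁻¹' Ioi (((m:ℝ)+1)/2^n)) (fun _ => (1:ℝ)) ω / 2^n) ∈ N :=
          hN.divPow ((hGm _).1 hS).2 n
        have heq : (fun ω =>
            Set.indicator (g' ⁻¹' Ioi (((m:ℝ)+1)/2^n)) (fun _ => (1:ℝ)) ω / 2^n)
            = fun ω => if ((m:ℝ)+1)/2^n < g' ω then ((2:ℝ)^n)⁻¹ else 0 := by
          funext ω
          by_cases h : ((m:ℝ)+1)/2^n < g' ω
          · rw [Set.indicator_of_mem (show ω ∈ g' ⁻¹' Ioi (((m:ℝ)+1)/2^n) from h), if_pos h]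
            rw [one_div]
          · rw [Set.indicator_of_notMem (show ω ∉ g' ⁻¹' Ioi (((m:ℝ)+1)/2^n) from h), if_neg h]
            rw [zero_div]
        rw [heq] at hdiv
        have h1 : ∀ i : ℕ, ∀ ω,
            (if ((i:ℝ)+1)/2^n < g' ω then ((2:ℝ)^n)⁻¹ else 0) ≤ ((2:ℝ)^n)⁻¹ := by
          intro i ω; split_ifs
          · exact le_rfl
          · positivity
        have hbound : ∀ ω,
            (∑ i ∈ Finset.range m, if ((i:ℝ)+1)/2^n < g' ω then ((2:ℝ)^n)⁻¹ else 0)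
              + (if ((m:ℝ)+1)/2^n < g' ω then ((2:ℝ)^n)⁻¹ else 0) ≤ 1 := by
          intro ω
          have h2 : (∑ i ∈ Finset.range m, if ((i:ℝ)+1)/2^n < g' ω then ((2:ℝ)^n)⁻¹ else 0)
              ≤ (m:ℝ) * ((2:ℝ)^n)⁻¹ := by
            have h := Finset.sum_le_sum (s := Finset.range m) (fun i _ => h1 i ω)
            rwa [Finset.sum_const, Finset.card_range, nsmul_eq_mul] at h
          have hcast : ((m:ℝ)+1) ≤ (2:ℝ)^n := by exact_mod_cast hm
          have h3 : ((m:ℝ)+1) * ((2:ℝ)^n)⁻¹ ≤ 1 := by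
            calc ((m:ℝ)+1) * ((2:ℝ)^n)⁻¹ ≤ (2:ℝ)^n * ((2:ℝ)^n)⁻¹ :=
                  mul_le_mul_of_nonneg_right hcast (by positivity)
              _ = 1 := mul_inv_cancel₀ (by positivity)
          have hring : ((m:ℝ)+1) * ((2:ℝ)^n)⁻¹
              = (m:ℝ) * ((2:ℝ)^n)⁻¹ + ((2:ℝ)^n)⁻¹ := by ring
          linarith [h1 m ω]
        have h2' : (fun ω => min
            ((∑ i ∈ Finset.range m, if ((i:ℝ)+1)/2^n < g' ω then ((2:ℝ)^n)⁻¹ else 0)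
              + (if ((m:ℝ)+1)/2^n < g' ω then ((2:ℝ)^n)⁻¹ else 0)) 1) ∈ N :=
          hN.truncAdd (ih hm') hdiv
        have hfin : (fun ω => ∑ i ∈ Finset.range (m+1),
            if ((i:ℝ)+1)/2^n < g' ω then ((2:ℝ)^n)⁻¹ else 0)
            = (fun ω => min
            ((∑ i ∈ Finset.range m, if ((i:ℝ)+1)/2^n < g' ω then ((2:ℝ)^n)⁻¹ else 0)
              + (if ((m:ℝ)+1)/2^n < g' ω then ((2:ℝ)^n)⁻¹ else 0)) 1) := by
          funext ω
          rw [Finset.sum_range_succ, min_eq_left (hbound ω)]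
        rw [hfin]
        exact h2'
    set A : Ω → ℝ := fun ω => ∑ i ∈ Finset.range (2^n),
      if ((i:ℝ)+1)/2^n < g' ω then ((2:ℝ)^n)⁻¹ else 0 with hAdef
    have hA : A ∈ N := hkey (2^n) le_rfl
    refine ⟨A, hA, ?_⟩
    have happrox : ∀ ω, |g' ω - A ω| ≤ ((2:ℝ)^n)⁻¹ := by
      intro ω
      have hx := sum_indicator_approx n (hg'1 ω).1 (2^n)
      have hle : g' ω ≤ (((2^n : ℕ)):ℝ)/2^n := by
        push_cast
        rw [div_self (by positivity : ((2:ℝ)^n) ≠ 0)]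
        exact (hg'1 ω).2
      obtain ⟨hl, hu⟩ := hx.2 hle
      rw [abs_le]
      constructor
      · simp only [hAdef]; linarith
      · simp only [hAdef]; linarith [inv_nonneg.2 (le_of_lt (by positivity : (0:ℝ) < 2^n))]
    have hfA : ∀ᵐ ω ∂μ, |f ω - A ω| ≤ ((2:ℝ)^n)⁻¹ :=
      hfg'.mono fun ω h => by rw [h]; exact happrox ω
    have hintA : Integrable (fun ω => |f ω - A ω|) μ :=
      integrable_of_bdd ((hfm.sub (hN.meas A hA)).abs) (C := 2) (fun ω => by
        have h1 := hf1 ω; have h2 := hN.icc A hA ω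
        rw [abs_abs, abs_le]
        constructor <;> [linarith [h1.1, h2.2]; linarith [h1.2, h2.1]])
    calc ∫ ω, |f ω - A ω| ∂μ ≤ ∫ _ω, ((2:ℝ)^n)⁻¹ ∂μ :=
          integral_mono_ae hintA (integrable_const _) hfA
      _ = ((2:ℝ)^n)⁻¹ := by simp [measure_univ]
      _ < ε := hn
  -- minimality
  refine ⟨sigmaOf μ N hN, hGF, hnull, Subset.antisymm hNsub hsubN, ?_⟩
  intro G' hG'F hG'null hG'rep s hs
  obtain ⟨hsF, hsN⟩ := (hGm s).1 hs
  obtain ⟨g, hgm, hge⟩ := hG'rep _ hsN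
  set t : Set Ω := g ⁻¹' Ioi (1/2) with htdef
  have htG' : MeasurableSet[G'] t := hgm measurableSet_Ioi
  have htF : MeasurableSet[F] t := hG'F t htG'
  have hne : μ {ω | ¬ Set.indicator s (fun _ => (1:ℝ)) ω = g ω} = 0 := ae_iff.1 hge
  have hd1 : μ (s \ t) = 0 := by
    refine measure_mono_null (fun ω hω => ?_) hne
    have h1 : Set.indicator s (fun _ => (1:ℝ)) ω = 1 := Set.indicator_of_mem hω.1 _
    have h2 : g ω ≤ 1/2 := not_lt.1 hω.2
    simp only [Set.mem_setOf_eq, h1]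
    intro hc; rw [← hc] at h2; norm_num at h2
  have hd2 : μ (t \ s) = 0 := by
    refine measure_mono_null (fun ω hω => ?_) hne
    have h1 : Set.indicator s (fun _ => (1:ℝ)) ω = 0 := Set.indicator_of_notMem hω.2 _
    have h2 : (1:ℝ)/2 < g ω := hω.1
    simp only [Set.mem_setOf_eq, h1]
    intro hc; rw [← hc] at h2; norm_num at h2
  have hG'd1 : MeasurableSet[G'] (s \ t) := hG'null _ (hsF.diff htF) hd1
  have hG'd2 : MeasurableSet[G'] (t \ s) := hG'null _ (htF.diff hsF) hd2
  have hseq : s = (t ∪ (s \ t)) \ (t \ s) := by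
    ext ω
    constructor
    · intro hω
      refine ⟨?_, ?_⟩
      · by_cases h : ω ∈ t
        · exact Or.inl h
        · exact Or.inr ⟨hω, h⟩
      · rintro ⟨_, hns⟩; exact hns hω
    · rintro ⟨h1, h2⟩
      rcases h1 with h | h
      · by_contra hns; exact h2 ⟨h, hns⟩
      · exact h.1
  rw [hseq]
  exact (htG'.union hG'd1).diff hG'd2

lemma part1 {μ : Measure Ω} [IsProbabilityMeasure μ] (F₁ : MeasurableSpace Ω) (hF₁ : F₁ ≤ F) :
    (fun _ => (0 : ℝ)) ∈ RVSet F μ F₁ ∧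
    (∀ f ∈ RVSet F μ F₁, (fun ω => 1 - f ω) ∈ RVSet F μ F₁) ∧
    (∀ f ∈ RVSet F μ F₁, (fun ω => f ω / 2) ∈ RVSet F μ F₁) ∧
    (∀ f g : Ω → ℝ, f ∈ RVSet F μ F₁ → g ∈ RVSet F μ F₁ →
      (fun ω => max (f ω - g ω) 0) ∈ RVSet F μ F₁) ∧
    (∀ f : Ω → ℝ, Measurable[F₁] f → (∀ ω, f ω ∈ Icc (0 : ℝ) 1) →
      (∀ ε : ℝ, 0 < ε → ∃ g ∈ RVSet F μ F₁, ∫ ω, |f ω - g ω| ∂μ < ε) →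
      f ∈ RVSet F μ F₁) := by
  refine ⟨⟨measurable_const, fun ω => ⟨le_rfl, zero_le_one⟩,
    fun _ => 0, measurable_const, Filter.EventuallyEq.rfl⟩, ?_, ?_, ?_, ?_⟩
  · rintro f ⟨hfm, hf1, g, hgm, hfg⟩
    exact ⟨measurable_const.sub hfm,
      fun ω => ⟨by show (0:ℝ) ≤ 1 - f ω; linarith [(hf1 ω).2],
        by show (1:ℝ) - f ω ≤ 1; linarith [(hf1 ω).1]⟩,
      fun ω => 1 - g ω, Measurable.sub measurable_const hgm,
      hfg.mono fun ω h => by show 1 - f ω = 1 - g ω; rw [h]⟩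
  · rintro f ⟨hfm, hf1, g, hgm, hfg⟩
    exact ⟨hfm.div_const 2,
      fun ω => ⟨by show (0:ℝ) ≤ f ω / 2; linarith [(hf1 ω).1],
        by show f ω / 2 ≤ (1:ℝ); linarith [(hf1 ω).2]⟩,
      fun ω => g ω / 2, hgm.div_const 2,
      hfg.mono fun ω h => by show f ω / 2 = g ω / 2; rw [h]⟩
  · rintro f g ⟨hfm, hf1, f', hf'm, hff'⟩ ⟨hgm, hg1, g', hg'm, hgg'⟩
    refine ⟨(hfm.sub hgm).max measurable_const,
      fun ω => ⟨le_max_right _ _,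
        max_le (by show f ω - g ω ≤ (1:ℝ); linarith [(hf1 ω).2, (hg1 ω).1]) zero_le_one⟩,
      fun ω => max (f' ω - g' ω) 0, (hf'm.sub hg'm).max measurable_const, ?_⟩
    filter_upwards [hff', hgg'] with ω h1 h2
    show max (f ω - g ω) 0 = max (f' ω - g' ω) 0
    rw [h1, h2]
  · intro f hfm hf1 _
    exact ⟨fun _ ht => hF₁ _ (hfm ht), hf1, f, hfm, Filter.EventuallyEq.rfl⟩

end Aux

set_option maxHeartbeats 1000000

/-- In `M = L¹(F, [0,1])`: for every sub-σ-algebra `F₁ ⊆ F`, the subset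
`L¹(F₁, [0,1]) ⊆ M` contains `0`, is closed under the operations `¬`, `½`, `∸` and is
closed in the `L¹` metric.  Conversely, every subset `N ⊆ M` containing `0`, closed under
`¬`, `½`, `∸` and closed in the `L¹` metric is of this form for a (smallest) sub-σ-algebra
`G = σ(N) ⊆ F` containing the `μ`-null sets of `F`. -/
theorem substructures_of_L1 {Ω : Type*} [F : MeasurableSpace Ω] (μ : Measure Ω)
    [IsProbabilityMeasure μ] :
    (∀ F₁ : MeasurableSpace Ω, F₁ ≤ F →
      ((fun _ => (0 : ℝ)) ∈ RVSet F μ F₁ ∧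
       (∀ f ∈ RVSet F μ F₁, (fun ω => 1 - f ω) ∈ RVSet F μ F₁) ∧
       (∀ f ∈ RVSet F μ F₁, (fun ω => f ω / 2) ∈ RVSet F μ F₁) ∧
       (∀ f g : Ω → ℝ, f ∈ RVSet F μ F₁ → g ∈ RVSet F μ F₁ →
         (fun ω => max (f ω - g ω) 0) ∈ RVSet F μ F₁) ∧
       (∀ f : Ω → ℝ, Measurable f → (∀ ω, f ω ∈ Icc (0 : ℝ) 1) →
         (∀ ε : ℝ, 0 < ε → ∃ g ∈ RVSet F μ F₁, ∫ ω, |f ω - g ω| ∂μ < ε) →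
         f ∈ RVSet F μ F₁))) ∧
    (∀ N : Set (Ω → ℝ), N.Nonempty →
      (∀ f ∈ N, Measurable f ∧ ∀ ω, f ω ∈ Icc (0 : ℝ) 1) →
      ((fun _ => (0 : ℝ)) ∈ N) →
      (∀ f ∈ N, (fun ω => 1 - f ω) ∈ N) →
      (∀ f ∈ N, (fun ω => f ω / 2) ∈ N) →
      (∀ f g : Ω → ℝ, f ∈ N → g ∈ N → (fun ω => max (f ω - g ω) 0) ∈ N) →
      (∀ f : Ω → ℝ, Measurable f → (∀ ω, f ω ∈ Icc (0 : ℝ) 1) →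
        (∀ ε : ℝ, 0 < ε → ∃ g ∈ N, ∫ ω, |f ω - g ω| ∂μ < ε) → f ∈ N) →
      ∃ G : MeasurableSpace Ω, G ≤ F ∧
        (∀ s : Set Ω, MeasurableSet[F] s → μ s = 0 → MeasurableSet[G] s) ∧
        N = RVSet F μ G ∧
        ∀ G' : MeasurableSpace Ω, G' ≤ F →
          (∀ s : Set Ω, MeasurableSet[F] s → μ s = 0 → MeasurableSet[G'] s) →
          (∀ f ∈ N, ∃ g : Ω → ℝ, Measurable[G'] g ∧ f =ᵐ[μ] g) → G ≤ G') := by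
  constructor
  · intro F₁ hF₁
    exact part1 (F := F) F₁ hF₁
  · intro N _hNe hmeas h0 hneg hhalf htsub hclosed
    have hN : Good μ N :=
      ⟨fun f hf => (hmeas f hf).1, fun f hf => (hmeas f hf).2, h0, hneg, hhalf, htsub, hclosed⟩
    exact hN.exists_G


end Stmt15
end

section
/- Let (Ω, F, μ) and (Ω', F', μ') be probability spaces, and let f̄ = (f₀,…,f_{ℓ−1}) ∈ L¹(F, [0,1])^ℓ and ḡ = (g₀,…,g_{ℓ−1}) ∈ L¹(F', [0,1])^ℓ. Then the following are equivalent: (i) for every term τ(x₀,…,x_{ℓ−1}) built from 0, ¬, ½, ∸, one has ∫ τ(f₀,…,f_{ℓ−1}) dμ = ∫ τ(g₀,…,g_{ℓ−1}) dμ' (where the operations are interpreted pointwise); (ii) f̄ and ḡ have the same joint distribution, i.e. the pushforward of μ under the map ω ↦ (f₀(ω),…,f_{ℓ−1}(ω)) ∈ [0,1]^ℓ equals the pushforward of μ' under ω ↦ (g₀(ω),…,g_{ℓ−1}(ω)). -/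
namespace Stmt16

open MeasureTheory Set

/-- Formal `L_RV`-terms in `ℓ` variables, built from the variables, the constant `0` and
the operations `¬`, `½`, `∸`. -/
inductive RVTerm (ℓ : ℕ) : Type where
  | var : Fin ℓ → RVTerm ℓ
  | zero : RVTerm ℓ
  | neg : RVTerm ℓ → RVTerm ℓ
  | half : RVTerm ℓ → RVTerm ℓ
  | sub : RVTerm ℓ → RVTerm ℓ → RVTerm ℓ

/-- The standard (pointwise) interpretation of a term: `¬t = 1 - t`, `½t = t/2`,
`s ∸ t = max (s - t) 0`, constant `0`. -/
noncomputable def RVTerm.evalR {ℓ : ℕ} (v : Fin ℓ → ℝ) : RVTerm ℓ → ℝ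
  | .var i => v i
  | .zero => 0
  | .neg t => 1 - RVTerm.evalR v t
  | .half t => RVTerm.evalR v t / 2
  | .sub s t => max (RVTerm.evalR v s - RVTerm.evalR v t) 0

variable {ℓ : ℕ}

lemma measurable_evalR (τ : RVTerm ℓ) :
    Measurable (fun v : Fin ℓ → ℝ => RVTerm.evalR v τ) := by
  induction τ with
  | var i => exact measurable_pi_apply i
  | zero => exact measurable_const
  | neg t ih => exact measurable_const.sub ih
  | half t ih => exact ih.div_const 2
  | sub s t ihs iht => exact (ihs.sub iht).max measurable_const

lemma evalR_mem_Icc {v : Fin ℓ → ℝ} (hv : ∀ i, v i ∈ Icc (0:ℝ) 1) (τ : RVTerm ℓ) :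
    RVTerm.evalR v τ ∈ Icc (0:ℝ) 1 := by
  induction τ with
  | var i => exact hv i
  | zero => simp [RVTerm.evalR]
  | neg t ih => simp only [RVTerm.evalR]; obtain ⟨h0, h1⟩ := ih; constructor <;> [linarith; linarith]
  | half t ih => simp only [RVTerm.evalR]; obtain ⟨h0, h1⟩ := ih; constructor <;> [linarith; linarith]
  | sub s t ihs iht =>
      simp only [RVTerm.evalR]
      obtain ⟨hs0, hs1⟩ := ihs; obtain ⟨ht0, ht1⟩ := iht
      exact ⟨le_max_right _ _, max_le (by linarith) (by linarith)⟩

/-- truncated addition, `min (s + t) 1` -/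
def oplus (s t : RVTerm ℓ) : RVTerm ℓ := .neg (.sub (.neg s) t)

lemma eval_oplus (v : Fin ℓ → ℝ) (s t : RVTerm ℓ) :
    RVTerm.evalR v (oplus s t) = min (RVTerm.evalR v s + RVTerm.evalR v t) 1 := by
  simp only [oplus, RVTerm.evalR]
  rcases le_total (RVTerm.evalR v s + RVTerm.evalR v t) 1 with h | h
  · rw [max_eq_left (by linarith), min_eq_left h]; ring
  · rw [max_eq_right (by linarith), min_eq_right h]; ring

def scaleT : ℕ → RVTerm ℓ → RVTerm ℓ
  | 0, t => t
  | n+1, t => oplus (scaleT n t) (scaleT n t)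

lemma eval_scaleT (v : Fin ℓ → ℝ) (t : RVTerm ℓ) (h0 : 0 ≤ RVTerm.evalR v t)
    (h1 : RVTerm.evalR v t ≤ 1) (n : ℕ) :
    RVTerm.evalR v (scaleT n t) = min (2 ^ n * RVTerm.evalR v t) 1 := by
  induction n with
  | zero => simp [scaleT, min_eq_left, h1]
  | succ n ih =>
      rw [scaleT, eval_oplus, ih]
      rcases le_total (2 ^ n * RVTerm.evalR v t) 1 with h | h
      · rw [min_eq_left h]
        congr 1
        ring
      · rw [min_eq_right h, min_eq_right (by norm_num), min_eq_right]
        have : (2:ℝ) ^ n * RVTerm.evalR v t ≤ 2 ^ (n+1) * RVTerm.evalR v t := by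
          rw [pow_succ]
          nlinarith [pow_nonneg (by norm_num : (0:ℝ) ≤ 2) n]
        linarith

def oneT : RVTerm ℓ := .neg .zero

lemma eval_oneT (v : Fin ℓ → ℝ) : RVTerm.evalR v (oneT : RVTerm ℓ) = 1 := by
  simp [oneT, RVTerm.evalR]

def halfT : ℕ → RVTerm ℓ
  | 0 => oneT
  | m+1 => .half (halfT m)

lemma eval_halfT (v : Fin ℓ → ℝ) (m : ℕ) :
    RVTerm.evalR v (halfT m : RVTerm ℓ) = 1 / 2 ^ m := by
  induction m with
  | zero => simp [halfT, eval_oneT]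
  | succ m ih => rw [halfT, RVTerm.evalR, ih]; rw [pow_succ]; ring

def dyT : ℕ → ℕ → RVTerm ℓ
  | 0, _ => .zero
  | k+1, m => oplus (dyT k m) (halfT m)

lemma eval_dyT (v : Fin ℓ → ℝ) (k m : ℕ) :
    RVTerm.evalR v (dyT k m : RVTerm ℓ) = min ((k : ℝ) / 2 ^ m) 1 := by
  induction k with
  | zero => simp [dyT, RVTerm.evalR]
  | succ k ih =>
      rw [dyT, eval_oplus, ih, eval_halfT]
      rcases le_total ((k : ℝ) / 2 ^ m) 1 with h | h
      · rw [min_eq_left h]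
        congr 1
        push_cast
        field_simp
      · have h3 : (0:ℝ) < 1 / 2 ^ m := by positivity
        have h4 : (1:ℝ) ≤ ((k+1 : ℕ) : ℝ) / 2 ^ m := by
          calc (1:ℝ) ≤ (k : ℝ) / 2 ^ m := h
          _ ≤ ((k:ℝ)+1) / 2 ^ m := by gcongr; linarith
          _ = ((k+1 : ℕ) : ℝ) / 2 ^ m := by push_cast; ring
        rw [min_eq_right h, min_eq_right (by linarith : (1:ℝ) ≤ 1 + 1/2^m),
          min_eq_right h4]


/-- `1 - min (2^n * max (v i - min (k/2^m) 1) 0) 1` -/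
def compT (i : Fin ℓ) (k m n : ℕ) : RVTerm ℓ := .neg (scaleT n (.sub (.var i) (dyT k m)))

lemma eval_compT {v : Fin ℓ → ℝ} (i : Fin ℓ) (k m n : ℕ)
    (h0 : 0 ≤ v i) (h1 : v i ≤ 1) :
    RVTerm.evalR v (compT i k m n)
      = 1 - min (2 ^ n * max (v i - min ((k:ℝ) / 2 ^ m) 1) 0) 1 := by
  have hq0 : (0:ℝ) ≤ min ((k:ℝ) / 2 ^ m) 1 := le_min (by positivity) one_pos.le
  have hsub : RVTerm.evalR v (RVTerm.sub (.var i) (dyT k m))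
      = max (v i - min ((k:ℝ) / 2 ^ m) 1) 0 := by
    simp [RVTerm.evalR, eval_dyT]
  have hs0 : 0 ≤ RVTerm.evalR v (RVTerm.sub (.var i) (dyT k m)) := by
    rw [hsub]; exact le_max_right _ _
  have hs1 : RVTerm.evalR v (RVTerm.sub (.var i) (dyT k m)) ≤ 1 := by
    rw [hsub]; exact max_le (by linarith) one_pos.le
  show 1 - RVTerm.evalR v (scaleT n (RVTerm.sub (.var i) (dyT k m))) = _
  rw [eval_scaleT _ _ hs0 hs1, hsub]

lemma eval_compT_mem {v : Fin ℓ → ℝ} (i : Fin ℓ) (k m n : ℕ)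
    (h0 : 0 ≤ v i) (h1 : v i ≤ 1) :
    RVTerm.evalR v (compT i k m n) ∈ Icc (0:ℝ) 1 := by
  rw [eval_compT i k m n h0 h1]
  have ha : (0:ℝ) ≤ 2 ^ n * max (v i - min ((k:ℝ) / 2 ^ m) 1) 0 := by positivity
  constructor
  · have := min_le_right (2 ^ n * max (v i - min ((k:ℝ) / 2 ^ m) 1) 0) 1
    linarith
  · have := le_min ha one_pos.le
    linarith

/-- truncated min -/
def minT (s t : RVTerm ℓ) : RVTerm ℓ := .sub s (.sub s t)

lemma eval_minT {v : Fin ℓ → ℝ} (s t : RVTerm ℓ)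
    (hs : 0 ≤ RVTerm.evalR v s) (ht : 0 ≤ RVTerm.evalR v t) :
    RVTerm.evalR v (minT s t) = min (RVTerm.evalR v s) (RVTerm.evalR v t) := by
  show max (RVTerm.evalR v s - max (RVTerm.evalR v s - RVTerm.evalR v t) 0) 0 = _
  rcases le_total (RVTerm.evalR v s) (RVTerm.evalR v t) with h | h
  · have h1 : max (RVTerm.evalR v s - RVTerm.evalR v t) 0 = 0 := max_eq_right (by linarith)
    rw [h1, sub_zero, max_eq_left hs, min_eq_left h]
  · have h1 : max (RVTerm.evalR v s - RVTerm.evalR v t) 0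
        = RVTerm.evalR v s - RVTerm.evalR v t := max_eq_left (by linarith)
    rw [h1, min_eq_right h,
      show RVTerm.evalR v s - (RVTerm.evalR v s - RVTerm.evalR v t) = RVTerm.evalR v t from by ring]
    exact max_eq_left ht

lemma foldr_min_nonneg (l : List ℝ) (h : ∀ x ∈ l, 0 ≤ x) : 0 ≤ l.foldr min 1 := by
  induction l with
  | nil => norm_num
  | cons a l ih =>
      exact le_min (h a (List.mem_cons_self (a := a) (l := l))) (ih fun x hx => h x (List.mem_cons_of_mem a hx))

lemma foldr_min_le (l : List ℝ) {x : ℝ} (hx : x ∈ l) : l.foldr min 1 ≤ x := by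
  induction l with
  | nil => simp at hx
  | cons a l ih =>
      rcases List.mem_cons.1 hx with rfl | hx
      · exact min_le_left _ _
      · exact le_trans (min_le_right _ _) (ih hx)

lemma foldr_min_eq_one (l : List ℝ) (h : ∀ x ∈ l, x = 1) : l.foldr min 1 = 1 := by
  induction l with
  | nil => rfl
  | cons a l ih =>
      rw [List.foldr_cons, h a (List.mem_cons_self (a := a) (l := l)),
        ih fun x hx => h x (List.mem_cons_of_mem a hx), min_self]

lemma eval_foldr_minT {v : Fin ℓ → ℝ} (L : List (RVTerm ℓ))
    (hL : ∀ t ∈ L, 0 ≤ RVTerm.evalR v t) :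
    RVTerm.evalR v (L.foldr minT oneT) = (L.map (RVTerm.evalR v)).foldr min 1 := by
  induction L with
  | nil => simpa using eval_oneT v
  | cons a L ih =>
      have hrest : RVTerm.evalR v (L.foldr minT oneT) = (L.map (RVTerm.evalR v)).foldr min 1 :=
        ih fun t ht => hL t (List.mem_cons_of_mem a ht)
      rw [List.foldr_cons, eval_minT _ _ (hL a (List.mem_cons_self (a := a) (l := L)))
        (by rw [hrest]
            exact foldr_min_nonneg _ (by
              intro x hx
              obtain ⟨t, ht, rfl⟩ := List.mem_map.1 hx
              exact hL t (List.mem_cons_of_mem a ht))),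
        hrest, List.map_cons, List.foldr_cons]

/-- approximates the indicator of the rectangle `{v | ∀ i, v i ≤ min (κ i / 2^m) 1}` -/
def rectT (κ : Fin ℓ → ℕ) (m n : ℕ) : RVTerm ℓ :=
  (List.ofFn fun i => compT i (κ i) m n).foldr minT oneT

lemma eval_rectT {v : Fin ℓ → ℝ} (hv : ∀ i, v i ∈ Icc (0:ℝ) 1) (κ : Fin ℓ → ℕ) (m n : ℕ) :
    RVTerm.evalR v (rectT κ m n)
      = (List.ofFn fun i =>
          1 - min (2 ^ n * max (v i - min ((κ i : ℝ) / 2 ^ m) 1) 0) 1).foldr min 1 := by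
  rw [rectT, eval_foldr_minT]
  · rw [List.map_ofFn]
    exact congrArg (List.foldr min 1)
      (congrArg List.ofFn (funext fun i => eval_compT i (κ i) m n (hv i).1 (hv i).2))
  · intro t ht
    obtain ⟨i, rfl⟩ := List.mem_ofFn.1 ht
    exact (eval_compT_mem i (κ i) m n (hv i).1 (hv i).2).1


lemma measurableSet_rect {Ω : Type*} [MeasurableSpace Ω] (f : Fin ℓ → Ω → ℝ)
    (hf : ∀ i, Measurable (f i)) (c : Fin ℓ → ℝ) :
    MeasurableSet {ω | ∀ i, f i ω ≤ c i} := by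
  have : {ω | ∀ i, f i ω ≤ c i} = ⋂ i, {ω | f i ω ≤ c i} := by
    ext ω; simp
  rw [this]
  exact MeasurableSet.iInter fun i => measurableSet_le (hf i) measurable_const

lemma tendsto_integral_rectT {Ω : Type*} [MeasurableSpace Ω] (μ : Measure Ω)
    [IsProbabilityMeasure μ] (f : Fin ℓ → Ω → ℝ)
    (hf : ∀ i, Measurable (f i)) (hf01 : ∀ i ω, f i ω ∈ Icc (0 : ℝ) 1)
    (κ : Fin ℓ → ℕ) (m : ℕ) :
    Filter.Tendsto (fun n => ∫ ω, RVTerm.evalR (fun i => f i ω) (rectT κ m n) ∂μ)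
      Filter.atTop
      (nhds ((μ {ω | ∀ i, f i ω ≤ min ((κ i : ℝ) / 2 ^ m) 1}).toReal)) := by
  set q : Fin ℓ → ℝ := fun i => min ((κ i : ℝ) / 2 ^ m) 1 with hq
  set S := {ω | ∀ i, f i ω ≤ q i} with hS
  have hSm : MeasurableSet S := measurableSet_rect f hf q
  rw [← measureReal_def, ← integral_indicator_one hSm]
  apply MeasureTheory.tendsto_integral_of_dominated_convergence (fun _ => (1:ℝ))
  · exact fun n => ((measurable_evalR _).comp (measurable_pi_lambda _ hf)).aestronglyMeasurable
  · exact integrable_const 1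
  · intro n
    refine Filter.Eventually.of_forall fun ω => ?_
    have h := evalR_mem_Icc (fun i => hf01 i ω) (rectT κ m n)
    rw [Real.norm_eq_abs, abs_le]
    exact ⟨by linarith [h.1], h.2⟩
  · refine Filter.Eventually.of_forall fun ω => ?_
    have hv : ∀ i, f i ω ∈ Icc (0:ℝ) 1 := fun i => hf01 i ω
    have heval : ∀ n, RVTerm.evalR (fun i => f i ω) (rectT κ m n)
        = (List.ofFn fun i =>
            1 - min (2 ^ n * max (f i ω - q i) 0) 1).foldr min 1 :=
      fun n => eval_rectT hv κ m n
    by_cases hω : ω ∈ S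
    · have hone : ∀ n : ℕ, RVTerm.evalR (fun i => f i ω) (rectT κ m n) = 1 := by
        intro n
        rw [heval n]
        apply foldr_min_eq_one
        intro x hx
        obtain ⟨i, rfl⟩ := List.mem_ofFn.1 hx
        have h0 : max (f i ω - q i) 0 = 0 := max_eq_right (by have := hω i; simpa [sub_nonpos])
        show 1 - min (2 ^ n * max (f i ω - q i) 0) 1 = 1
        rw [h0, mul_zero, min_eq_left one_pos.le, sub_zero]
      rw [Set.indicator_of_mem hω, Pi.one_apply]
      simpa [hone] using tendsto_const_nhds
    · rw [Set.indicator_of_notMem hω]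
      simp only [hS, Set.mem_setOf_eq, not_forall, not_le] at hω
      obtain ⟨i0, hi0⟩ := hω
      set d := f i0 ω - q i0 with hd
      have hdpos : 0 < d := by simp only [hd]; linarith
      obtain ⟨N, hN⟩ := pow_unbounded_of_one_lt (1 / d) (one_lt_two : (1:ℝ) < 2)
      have hNd : 1 < 2 ^ N * d := by
        rw [div_lt_iff₀ hdpos] at hN
        linarith
      refine Filter.Tendsto.congr' ?_ tendsto_const_nhds
      filter_upwards [Filter.eventually_ge_atTop N] with n hn
      have hmono : (2:ℝ) ^ N ≤ 2 ^ n := pow_le_pow_right₀ one_le_two hn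
      have hzero : (1:ℝ) - min (2 ^ n * max (f i0 ω - q i0) 0) 1 = 0 := by
        have hmax : max (f i0 ω - q i0) 0 = d := max_eq_left hdpos.le
        rw [hmax, min_eq_right (by nlinarith)]
        ring
      have hle : (List.ofFn fun i =>
          1 - min (2 ^ n * max (f i ω - q i) 0) 1).foldr min 1 ≤ 0 := by
        have hm : (1 - min (2 ^ n * max (f i0 ω - q i0) 0) 1)
            ∈ (List.ofFn fun i => 1 - min (2 ^ n * max (f i ω - q i) 0) 1) :=
          List.mem_ofFn.2 ⟨i0, rfl⟩
        exact (foldr_min_le _ hm).trans hzero.le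
      have hge : 0 ≤ (List.ofFn fun i =>
          1 - min (2 ^ n * max (f i ω - q i) 0) 1).foldr min 1 := by
        apply foldr_min_nonneg
        intro x hx
        obtain ⟨i, rfl⟩ := List.mem_ofFn.1 hx
        show 0 ≤ 1 - min (2 ^ n * max (f i ω - q i) 0) 1
        have := min_le_right (2 ^ n * max (f i ω - q i) 0) 1
        linarith
      rw [heval n]
      linarith


/-- Two tuples of `[0,1]`-valued random variables have the same quantifier-free
`L_RV`-type (the expectations of all terms agree) if and only if they have the same
joint distribution. -/
theorem qf_type_iff_joint_distribution {Ω Ω' : Type*}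
    [MeasurableSpace Ω] [MeasurableSpace Ω'] (μ : Measure Ω) (μ' : Measure Ω')
    [IsProbabilityMeasure μ] [IsProbabilityMeasure μ'] {ℓ : ℕ}
    (f : Fin ℓ → Ω → ℝ) (g : Fin ℓ → Ω' → ℝ)
    (hf : ∀ i, Measurable (f i)) (hf01 : ∀ i ω, f i ω ∈ Icc (0 : ℝ) 1)
    (hg : ∀ i, Measurable (g i)) (hg01 : ∀ i ω, g i ω ∈ Icc (0 : ℝ) 1) :
    (∀ τ : RVTerm ℓ,
      ∫ ω, RVTerm.evalR (fun i => f i ω) τ ∂μ = ∫ ω, RVTerm.evalR (fun i => g i ω) τ ∂μ') ↔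
    μ.map (fun ω i => f i ω) = μ'.map (fun ω i => g i ω) := by
  have hF : Measurable fun ω (i : Fin ℓ) => f i ω := measurable_pi_lambda _ hf
  have hG : Measurable fun ω (i : Fin ℓ) => g i ω := measurable_pi_lambda _ hg
  constructor
  · intro H
    -- Step 1: dyadic rectangles
    have key1 : ∀ (κ : Fin ℓ → ℕ) (m : ℕ),
        μ {ω | ∀ i, f i ω ≤ min ((κ i : ℝ) / 2 ^ m) 1}
          = μ' {ω | ∀ i, g i ω ≤ min ((κ i : ℝ) / 2 ^ m) 1} := by
      intro κ m
      have t1 := tendsto_integral_rectT μ f hf hf01 κ m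
      have t2 := tendsto_integral_rectT μ' g hg hg01 κ m
      have heq : (fun n => ∫ ω, RVTerm.evalR (fun i => f i ω) (rectT κ m n) ∂μ)
          = fun n => ∫ ω, RVTerm.evalR (fun i => g i ω) (rectT κ m n) ∂μ' :=
        funext fun n => H (rectT κ m n)
      rw [heq] at t1
      exact (ENNReal.toReal_eq_toReal_iff' (measure_ne_top μ _) (measure_ne_top μ' _)).1
        (tendsto_nhds_unique t1 t2)
    -- Step 2: all real rectangles
    have key2 : ∀ c : Fin ℓ → ℝ,
        μ {ω | ∀ i, f i ω ≤ c i} = μ' {ω | ∀ i, g i ω ≤ c i} := by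
      intro c
      by_cases hc : ∀ i, 0 ≤ c i
      · set c' : Fin ℓ → ℝ := fun i => min (c i) 1 with hc'def
        have hc'0 : ∀ i, 0 ≤ c' i := fun i => le_min (hc i) one_pos.le
        have hc'1 : ∀ i, c' i ≤ 1 := fun i => min_le_right _ _
        have hsetf : {ω | ∀ i, f i ω ≤ c i} = {ω | ∀ i, f i ω ≤ c' i} := by
          ext ω
          simp only [Set.mem_setOf_eq, hc'def, le_min_iff]
          exact forall_congr' fun i => ⟨fun h => ⟨h, (hf01 i ω).2⟩, fun h => h.1⟩
        have hsetg : {ω | ∀ i, g i ω ≤ c i} = {ω | ∀ i, g i ω ≤ c' i} := by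
          ext ω
          simp only [Set.mem_setOf_eq, hc'def, le_min_iff]
          exact forall_congr' fun i => ⟨fun h => ⟨h, (hg01 i ω).2⟩, fun h => h.1⟩
        set κN : ℕ → Fin ℓ → ℕ := fun N i => ⌈c' i * 2 ^ N⌉₊ with hκN
        set qN : ℕ → Fin ℓ → ℝ := fun N i => (κN N i : ℝ) / 2 ^ N with hqN
        have h2pos : ∀ N : ℕ, (0:ℝ) < 2 ^ N := fun N => by positivity
        have hq1 : ∀ N i, qN N i ≤ 1 := by
          intro N i
          rw [hqN]
          rw [div_le_one (h2pos N)]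
          have : κN N i ≤ 2 ^ N := Nat.ceil_le.2 (by
            calc c' i * 2 ^ N ≤ 1 * 2 ^ N := by nlinarith [hc'1 i, h2pos N]
            _ = ((2 ^ N : ℕ) : ℝ) := by push_cast; ring)
          calc ((κN N i : ℕ) : ℝ) ≤ ((2 ^ N : ℕ) : ℝ) := Nat.cast_le.2 this
          _ = 2 ^ N := by push_cast; ring
        have hqc : ∀ N i, c' i ≤ qN N i := by
          intro N i
          rw [hqN, le_div_iff₀ (h2pos N)]
          exact Nat.le_ceil _
        have hqlt : ∀ N i, qN N i < c' i + 1 / 2 ^ N := by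
          intro N i
          rw [hqN, div_lt_iff₀ (h2pos N)]
          have := Nat.ceil_lt_add_one (mul_nonneg (hc'0 i) (h2pos N).le)
          calc ((κN N i : ℕ) : ℝ) < c' i * 2 ^ N + 1 := this
          _ = (c' i + 1 / 2 ^ N) * 2 ^ N := by field_simp
        have hanti : ∀ N i, qN (N + 1) i ≤ qN N i := by
          intro N i
          have hceil : κN (N + 1) i ≤ 2 * κN N i := by
            apply Nat.ceil_le.2
            push_cast
            calc c' i * 2 ^ (N + 1) = c' i * 2 ^ N * 2 := by ring
            _ ≤ (⌈c' i * 2 ^ N⌉₊ : ℝ) * 2 := by nlinarith [Nat.le_ceil (c' i * 2 ^ N)]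
            _ = 2 * (⌈c' i * 2 ^ N⌉₊ : ℝ) := by ring
          rw [hqN]
          rw [div_le_div_iff₀ (h2pos (N + 1)) (h2pos N)]
          calc ((κN (N + 1) i : ℕ) : ℝ) * 2 ^ N ≤ (2 * κN N i : ℕ) * 2 ^ N := by
                have hcast : ((κN (N + 1) i : ℕ) : ℝ) ≤ ((2 * κN N i : ℕ) : ℝ) :=
                  Nat.cast_le.2 hceil
                nlinarith [h2pos N]
          _ = (κN N i : ℝ) * 2 ^ (N + 1) := by push_cast; ring
        -- the intersections
        set T : ℕ → Set Ω := fun N => {ω | ∀ i, f i ω ≤ qN N i} with hT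
        set T' : ℕ → Set Ω' := fun N => {ω | ∀ i, g i ω ≤ qN N i} with hT'
        have hTanti : Antitone T := antitone_nat_of_succ_le fun N ω hω i =>
          le_trans (hω i) (hanti N i)
        have hT'anti : Antitone T' := antitone_nat_of_succ_le fun N ω hω i =>
          le_trans (hω i) (hanti N i)
        have hinterf : {ω | ∀ i, f i ω ≤ c' i} = ⋂ N, T N := by
          ext ω
          simp only [Set.mem_iInter, hT, Set.mem_setOf_eq]
          constructor
          · intro h N i
            exact le_trans (h i) (hqc N i)
          · intro h i
            by_contra hlt
            push_neg at hlt
            obtain ⟨N, hN⟩ := exists_pow_lt_of_lt_one (sub_pos.2 hlt)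
              (by norm_num : (1:ℝ)/2 < 1)
            have h1 : f i ω ≤ qN N i := h N i
            have h2 : qN N i < c' i + 1 / 2 ^ N := hqlt N i
            have h3 : (1/2 : ℝ) ^ N = 1 / 2 ^ N := by rw [div_pow, one_pow]
            linarith [hN, h3 ▸ hN]
          done
        have hinterg : {ω | ∀ i, g i ω ≤ c' i} = ⋂ N, T' N := by
          ext ω
          simp only [Set.mem_iInter, hT', Set.mem_setOf_eq]
          constructor
          · intro h N i
            exact le_trans (h i) (hqc N i)
          · intro h i
            by_contra hlt
            push_neg at hlt
            obtain ⟨N, hN⟩ := exists_pow_lt_of_lt_one (sub_pos.2 hlt)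
              (by norm_num : (1:ℝ)/2 < 1)
            have h1 : g i ω ≤ qN N i := h N i
            have h2 : qN N i < c' i + 1 / 2 ^ N := hqlt N i
            have h3 : (1/2 : ℝ) ^ N = 1 / 2 ^ N := by rw [div_pow, one_pow]
            linarith [hN, h3 ▸ hN]
        have hTeq : ∀ N, μ (T N) = μ' (T' N) := by
          intro N
          have e1 : T N = {ω | ∀ i, f i ω ≤ min ((κN N i : ℝ) / 2 ^ N) 1} := by
            ext ω
            simp only [hT, Set.mem_setOf_eq]
            exact forall_congr' fun i => by rw [min_eq_left (hq1 N i)]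
          have e2 : T' N = {ω | ∀ i, g i ω ≤ min ((κN N i : ℝ) / 2 ^ N) 1} := by
            ext ω
            simp only [hT', Set.mem_setOf_eq]
            exact forall_congr' fun i => by rw [min_eq_left (hq1 N i)]
          rw [e1, e2]
          exact key1 (κN N) N
        have l1 : Filter.Tendsto (μ ∘ T) Filter.atTop (nhds (μ (⋂ N, T N))) :=
          tendsto_measure_iInter_atTop
            (fun N => (measurableSet_rect f hf (qN N)).nullMeasurableSet)
            hTanti ⟨0, measure_ne_top μ _⟩
        have l2 : Filter.Tendsto (μ' ∘ T') Filter.atTop (nhds (μ' (⋂ N, T' N))) :=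
          tendsto_measure_iInter_atTop
            (fun N => (measurableSet_rect g hg (qN N)).nullMeasurableSet)
            hT'anti ⟨0, measure_ne_top μ' _⟩
        have hfun : (μ ∘ T) = (μ' ∘ T') := funext fun N => hTeq N
        rw [hfun] at l1
        rw [hsetf, hsetg, hinterf, hinterg]
        exact tendsto_nhds_unique l1 l2
      · push_neg at hc
        obtain ⟨i0, hi0⟩ := hc
        have e1 : {ω | ∀ i, f i ω ≤ c i} = (∅ : Set Ω) := by
          rw [Set.eq_empty_iff_forall_notMem]
          intro ω hω
          exact absurd ((hf01 i0 ω).1.trans (hω i0)) (not_le.2 hi0)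
        have e2 : {ω | ∀ i, g i ω ≤ c i} = (∅ : Set Ω') := by
          rw [Set.eq_empty_iff_forall_notMem]
          intro ω hω
          exact absurd ((hg01 i0 ω).1.trans (hω i0)) (not_le.2 hi0)
        rw [e1, e2, measure_empty, measure_empty]
    -- Step 3: π-system argument
    have hspan : IsCountablySpanning (range (Iic : ℝ → Set ℝ)) := by
      refine ⟨fun n => Iic (n : ℝ), fun n => mem_range_self _, ?_⟩
      rw [Set.eq_univ_iff_forall]
      intro x
      obtain ⟨n, hn⟩ := exists_nat_ge x
      exact Set.mem_iUnion.2 ⟨n, hn⟩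
    have hgen : (inferInstance : MeasurableSpace (Fin ℓ → ℝ))
        = MeasurableSpace.generateFrom
          (pi univ '' pi univ fun _ : Fin ℓ => range (Iic : ℝ → Set ℝ)) := by
      have h1 : (inferInstance : MeasurableSpace (Fin ℓ → ℝ))
          = @MeasurableSpace.pi _ _
            (fun _ : Fin ℓ => MeasurableSpace.generateFrom (range (Iic : ℝ → Set ℝ))) := by
        have h2 : (inferInstance : MeasurableSpace ℝ)
            = MeasurableSpace.generateFrom (range (Iic : ℝ → Set ℝ)) := by
          rw [← borel_eq_generateFrom_Iic ℝ]
          exact BorelSpace.measurable_eq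
        show MeasurableSpace.pi = _
        congr 1
        funext _
        exact h2
      rw [h1, generateFrom_pi_eq fun _ => hspan]
    refine MeasureTheory.ext_of_generate_finite _ hgen
      (IsPiSystem.pi fun _ => isPiSystem_Iic) ?_ ?_
    · rintro s ⟨t, ht, rfl⟩
      rw [Set.mem_univ_pi] at ht
      choose c hc using ht
      have htm : MeasurableSet (pi univ t) :=
        MeasurableSet.univ_pi fun i => (hc i) ▸ measurableSet_Iic
      rw [Measure.map_apply hF htm, Measure.map_apply hG htm]
      have e1 : (fun ω (i : Fin ℓ) => f i ω) ⁻¹' (pi univ t) = {ω | ∀ i, f i ω ≤ c i} := by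
        ext ω
        simp only [Set.mem_preimage, Set.mem_univ_pi, Set.mem_setOf_eq]
        exact forall_congr' fun i => by rw [← hc i, Set.mem_Iic]
      have e2 : (fun ω (i : Fin ℓ) => g i ω) ⁻¹' (pi univ t) = {ω | ∀ i, g i ω ≤ c i} := by
        ext ω
        simp only [Set.mem_preimage, Set.mem_univ_pi, Set.mem_setOf_eq]
        exact forall_congr' fun i => by rw [← hc i, Set.mem_Iic]
      rw [e1, e2]
      exact key2 c
    · have : IsProbabilityMeasure (μ.map (fun ω (i : Fin ℓ) => f i ω)) :=
        MeasureTheory.Measure.isProbabilityMeasure_map hF.aemeasurable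
      have : IsProbabilityMeasure (μ'.map (fun ω (i : Fin ℓ) => g i ω)) :=
        MeasureTheory.Measure.isProbabilityMeasure_map hG.aemeasurable
      simp [measure_univ]
  · intro h τ
    calc ∫ ω, RVTerm.evalR (fun i => f i ω) τ ∂μ
        = ∫ v, RVTerm.evalR v τ ∂(μ.map (fun ω (i : Fin ℓ) => f i ω)) :=
          (integral_map hF.aemeasurable (measurable_evalR τ).aestronglyMeasurable).symm
      _ = ∫ v, RVTerm.evalR v τ ∂(μ'.map (fun ω (i : Fin ℓ) => g i ω)) := by rw [h]
      _ = ∫ ω, RVTerm.evalR (fun i => g i ω) τ ∂μ' :=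
          integral_map hG.aemeasurable (measurable_evalR τ).aestronglyMeasurable


end Stmt16
end
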